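/- arXiv:math/0503193 — 8 statements merged into one kernel-verified Lean document; each statement's English description precedes it below -/
import Mathlib

section
/- Let V be a finite-dimensional real vector space and let ω₁ and ω₂ be linear symplectic forms on V. Assume that every complex structure J on V that is tamed by ω₁ is also tamed by ω₂. Then there exists a real number λ > 0 such that ω₂ = λ · ω₁; in particular the set of complex structures tamed by ω₁ coincides with the set of complex structures tamed by ω₂. -/
/-- A linear symplectic form: an alternating, nondegenerate bilinear form. -/
def IsSymplecticForm {V : Type*} [AddCommGroup V] [Module ℝ V]
    (ω : V →ₗ[ℝ] V →ₗ[ℝ] ℝ) : Prop :=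
  (∀ v, ω v v = 0) ∧ ∀ v, v ≠ 0 → ∃ w, ω v w ≠ 0

/-- A complex structure: a linear endomorphism with `J ∘ J = -id`. -/
def IsComplexStructure {V : Type*} [AddCommGroup V] [Module ℝ V]
    (J : V →ₗ[ℝ] V) : Prop :=
  ∀ v, J (J v) = -v

/-- `J` is tamed by `ω` if `ω(v, J v) > 0` for all `v ≠ 0`. -/
def Tames {V : Type*} [AddCommGroup V] [Module ℝ V]
    (ω : V →ₗ[ℝ] V →ₗ[ℝ] ℝ) (J : V →ₗ[ℝ] V) : Prop :=
  ∀ v, v ≠ 0 → 0 < ω v (J v)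

set_option maxHeartbeats 1000000

open Module

universe u

lemma skew_of_alt {V : Type*} [AddCommGroup V] [Module ℝ V]
    (ω : V →ₗ[ℝ] V →ₗ[ℝ] ℝ) (halt : ∀ v, ω v v = 0) (x y : V) :
    ω x y = -ω y x := by
  have h := halt (x + y)
  simp only [map_add, LinearMap.add_apply, halt] at h
  linarith

lemma exists_tame_fixing :
    ∀ (n : ℕ) (V : Type u) [AddCommGroup V] [Module ℝ V] [FiniteDimensional ℝ V],
    finrank ℝ V ≤ n →
    ∀ (ω : V →ₗ[ℝ] V →ₗ[ℝ] ℝ), IsSymplecticForm ω →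
    ∀ v w : V, 0 < ω v w →
    ∃ J : V →ₗ[ℝ] V, IsComplexStructure J ∧ Tames ω J ∧ J v = w := by
  intro n
  induction n with
  | zero =>
    intro V _ _ _ hn ω hω v w hc
    have hsub : Subsingleton V := by
      rw [← finrank_zero_iff (R := ℝ)]; omega
    have : v = 0 := Subsingleton.elim _ _
    rw [this] at hc
    simp at hc
  | succ n IH =>
    intro V _ _ _ hn ω hω v w hc
    obtain ⟨halt, hnd⟩ := hω
    have hskew : ∀ x y : V, ω x y = -ω y x := skew_of_alt ω halt
    set c := ω v w with hcdef
    have hc0 : (c : ℝ) ≠ 0 := ne_of_gt hc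
    -- the symplectic complement of span{v, w}
    set Q : Submodule ℝ V := LinearMap.ker (ω v) ⊓ LinearMap.ker (ω w) with hQdef
    have hmemQ : ∀ x : V, x ∈ Q ↔ ω v x = 0 ∧ ω w x = 0 := by
      intro x
      simp [hQdef, LinearMap.mem_ker]
    -- projection onto Q
    set π : V →ₗ[ℝ] V :=
      LinearMap.id - c⁻¹ • (ω v).smulRight w + c⁻¹ • (ω w).smulRight v with hπdef
    have hπapp : ∀ u, π u = u - (c⁻¹ * ω v u) • w + (c⁻¹ * ω w u) • v := by
      intro u
      simp [hπdef, LinearMap.smulRight_apply, smul_smul]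
    have hwv : ω w v = -c := by rw [hskew w v]
    have hπmem : ∀ u, π u ∈ Q := by
      intro u
      rw [hmemQ]
      constructor
      · rw [hπapp]
        simp only [map_add, map_sub, map_smul, smul_eq_mul, halt v, ← hcdef]
        field_simp
        ring
      · rw [hπapp]
        simp only [map_add, map_sub, map_smul, smul_eq_mul, halt w, hwv]
        field_simp
        ring
    have hdecomp : ∀ u : V, u = (c⁻¹ * ω v u) • w - (c⁻¹ * ω w u) • v + π u := by
      intro u
      rw [hπapp]
      abel
    set ρ : V →ₗ[ℝ] Q := LinearMap.codRestrict Q π hπmem with hρdef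
    have hρapp : ∀ u, (ρ u : V) = π u := by intro u; rfl
    -- restricted form
    set ω' : Q →ₗ[ℝ] Q →ₗ[ℝ] ℝ := (ω.domRestrict Q).compl₂ Q.subtype with hω'def
    have hω'app : ∀ x y : Q, ω' x y = ω (x : V) (y : V) := by
      intro x y; rfl
    have hω'symp : IsSymplecticForm ω' := by
      constructor
      · intro x; rw [hω'app]; exact halt _
      · intro x hx
        obtain ⟨u, hu⟩ := hnd (x : V) (by simpa using hx)
        refine ⟨ρ u, ?_⟩
        rw [hω'app, hρapp]
        have hxv : ω v (x : V) = 0 := ((hmemQ _).1 x.2).1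
        have hxw : ω w (x : V) = 0 := ((hmemQ _).1 x.2).2
        have h1 : ω (x : V) v = 0 := by rw [hskew, hxv, neg_zero]
        have h2 : ω (x : V) w = 0 := by rw [hskew, hxw, neg_zero]
        intro hcontra
        apply hu
        have hstep : ω (x : V) u = ω (x : V) (π u) := by
          conv_lhs => rw [hdecomp u]
          simp [map_add, map_sub, map_smul, h1, h2]
        rw [hstep, hcontra]
    -- Q has smaller dimension
    have hvnotQ : v ∉ Q := by
      rw [hmemQ]
      rintro ⟨-, h2⟩
      rw [hwv] at h2
      exact hc0 (by linarith)
    have hQlt : finrank ℝ Q ≤ n := by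
      have : Q < ⊤ := lt_top_iff_ne_top.mpr (fun hQT => hvnotQ (hQT ▸ Submodule.mem_top))
      have h2 : finrank ℝ Q < finrank ℝ V := Submodule.finrank_lt this.ne
      omega
    -- tame complex structure on Q
    obtain ⟨JQ, hJQc, hJQt⟩ :
        ∃ JQ : Q →ₗ[ℝ] Q, IsComplexStructure JQ ∧ Tames ω' JQ := by
      by_cases hQ0 : ∀ x : Q, x = 0
      · refine ⟨0, ?_, ?_⟩
        · intro x; rw [hQ0 x]; simp
        · intro x hx; exact absurd (hQ0 x) hx
      · push_neg at hQ0
        obtain ⟨x₀, hx₀⟩ := hQ0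
        obtain ⟨y₀, hy₀⟩ := hω'symp.2 x₀ hx₀
        rcases lt_or_gt_of_ne hy₀ with hneg | hpos
        · obtain ⟨JQ, h1, h2, -⟩ := IH Q hQlt ω' hω'symp x₀ (-y₀)
            (by rw [map_neg]; linarith)
          exact ⟨JQ, h1, h2⟩
        · obtain ⟨JQ, h1, h2, -⟩ := IH Q hQlt ω' hω'symp x₀ y₀ hpos
          exact ⟨JQ, h1, h2⟩
    -- the complex structure on V
    set J : V →ₗ[ℝ] V :=
      (-(c⁻¹)) • (ω w).smulRight w + (-(c⁻¹)) • (ω v).smulRight v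
        + Q.subtype ∘ₗ JQ ∘ₗ ρ with hJdef
    have hJapp : ∀ u, J u = (-(c⁻¹) * ω w u) • w + (-(c⁻¹) * ω v u) • v + (JQ (ρ u) : V) := by
      intro u
      simp [hJdef, LinearMap.smulRight_apply, smul_smul]
    have hρv : ρ v = 0 := by
      apply Subtype.ext
      rw [hρapp v, hπapp, halt v, hwv]
      simp
      rw [inv_mul_cancel₀ hc0]
      simp
    have hρw : ρ w = 0 := by
      apply Subtype.ext
      rw [hρapp w, hπapp, halt w, ← hcdef]
      simp
      rw [inv_mul_cancel₀ hc0]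
      simp
    have hρQ : ∀ x : Q, ρ (x : V) = x := by
      intro x
      apply Subtype.ext
      rw [hρapp, hπapp, ((hmemQ _).1 x.2).1, ((hmemQ _).1 x.2).2]
      simp
    have hJv : J v = w := by
      rw [hJapp, halt v, hwv, hρv]
      simp
      rw [inv_mul_cancel₀ hc0]
      simp
    have hJw : J w = -v := by
      rw [hJapp, halt w, ← hcdef, hρw]
      simp
      rw [inv_mul_cancel₀ hc0]
      simp
    have hJQmem : ∀ x : Q, J (x : V) = (JQ x : V) := by
      intro x
      rw [hJapp, ((hmemQ _).1 x.2).1, ((hmemQ _).1 x.2).2, hρQ]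
      simp
    clear_value J ρ ω' π Q c
    have hωQ : ∀ (u : V) (x : Q), ω u (x : V) = ω' (ρ u) x := by
      intro u x
      conv_lhs => rw [hdecomp u]
      simp only [map_add, map_sub, map_smul, LinearMap.add_apply, LinearMap.sub_apply,
        LinearMap.smul_apply, smul_eq_mul, ((hmemQ _).1 x.2).1, ((hmemQ _).1 x.2).2]
      rw [hω'app, hρapp]
      ring
    refine ⟨J, ?_, ?_, hJv⟩
    · -- complex structure
      intro u
      have h1 : J (J u) = (-c⁻¹ * ω w u) • J w + (-c⁻¹ * ω v u) • J v + J ((JQ (ρ u) : V)) := by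
        conv_lhs => rw [hJapp u]
        rw [map_add, map_add, map_smul, map_smul]
      rw [h1, hJw, hJv, hJQmem (JQ (ρ u)), hJQc (ρ u), Submodule.coe_neg, hρapp]
      conv_rhs => rw [hdecomp u]
      module
    · -- tame
      intro u hu
      rw [hJapp u]
      have expand : ω u ((-(c⁻¹) * ω w u) • w + (-(c⁻¹) * ω v u) • v + (JQ (ρ u) : V))
          = (-(c⁻¹) * ω w u) * ω u w + (-(c⁻¹) * ω v u) * ω u v + ω u (JQ (ρ u) : V) := by
        simp [map_add, map_smul]
      rw [expand]
      have huw : ω u w = -(ω w u) := by rw [hskew]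
      have huv : ω u v = -(ω v u) := by rw [hskew]
      have hlast : ω u (JQ (ρ u) : V) = ω' (ρ u) (JQ (ρ u)) := hωQ u (JQ (ρ u))
      rw [huw, huv, hlast]
      have hinv : (0:ℝ) < c⁻¹ := by positivity
      by_cases hq : ρ u = 0
      · have hsu : ω v u ≠ 0 ∨ ω w u ≠ 0 := by
          by_contra hboth
          push_neg at hboth
          apply hu
          have := hdecomp u
          rw [hboth.1, hboth.2] at this
          simp at this
          rw [this, ← hρapp, hq]
          simp
        have hzero : ω' (ρ u) (JQ (ρ u)) = 0 := by rw [hq]; simp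
        rw [hzero]
        rcases hsu with hs | ht
        · nlinarith [sq_nonneg (ω v u), sq_nonneg (ω w u), mul_pos hinv (mul_self_pos.mpr hs)]
        · nlinarith [sq_nonneg (ω v u), sq_nonneg (ω w u), mul_pos hinv (mul_self_pos.mpr ht)]
      · have hpos := hJQt (ρ u) hq
        have e : -c⁻¹ * ω w u * -(ω w u) + -c⁻¹ * ω v u * -(ω v u) + ω' (ρ u) (JQ (ρ u))
            = c⁻¹ * (ω w u * ω w u) + c⁻¹ * (ω v u * ω v u) + ω' (ρ u) (JQ (ρ u)) := by
          ring
        rw [e]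
        have n1 : 0 ≤ c⁻¹ * (ω w u * ω w u) := mul_nonneg hinv.le (mul_self_nonneg _)
        have n2 : 0 ≤ c⁻¹ * (ω v u * ω v u) := mul_nonneg hinv.le (mul_self_nonneg _)
        linarith only [n1, n2, hpos]

lemma prop_of_ker_le {V : Type*} [AddCommGroup V] [Module ℝ V]
    (ω : V →ₗ[ℝ] V →ₗ[ℝ] ℝ) (hnd : ∀ v, v ≠ 0 → ∃ w, ω v w ≠ 0)
    (x y : V) (hx : x ≠ 0) (hker : ∀ w, ω x w = 0 → ω y w = 0) :
    ∃ k : ℝ, y = k • x := by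
  obtain ⟨w₀, hw₀⟩ := hnd x hx
  refine ⟨ω y w₀ / ω x w₀, ?_⟩
  by_contra hne
  have hyx : y - (ω y w₀ / ω x w₀) • x ≠ 0 := sub_ne_zero.mpr hne
  obtain ⟨w, hw⟩ := hnd _ hyx
  apply hw
  have hker' : ω x (w - (ω x w / ω x w₀) • w₀) = 0 := by
    rw [map_sub, map_smul, smul_eq_mul]
    field_simp
    ring
  have h2 := hker _ hker'
  rw [map_sub, map_smul, smul_eq_mul] at h2
  have hyw : ω y w = (ω x w / ω x w₀) * ω y w₀ := by linarith
  rw [map_sub, map_smul, LinearMap.sub_apply, LinearMap.smul_apply, smul_eq_mul, hyw]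
  field_simp
  ring

theorem taming_determines_form_up_to_positive_scalar
    {V : Type*} [AddCommGroup V] [Module ℝ V] [FiniteDimensional ℝ V]
    (ω₁ ω₂ : V →ₗ[ℝ] V →ₗ[ℝ] ℝ)
    (h₁ : IsSymplecticForm ω₁) (h₂ : IsSymplecticForm ω₂)
    (h : ∀ J : V →ₗ[ℝ] V, IsComplexStructure J → Tames ω₁ J → Tames ω₂ J) :
    ∃ lam : ℝ, 0 < lam ∧ ω₂ = lam • ω₁ ∧
      ∀ J : V →ₗ[ℝ] V, IsComplexStructure J → (Tames ω₁ J ↔ Tames ω₂ J) := by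
  obtain ⟨halt₁, hnd₁⟩ := h₁
  obtain ⟨halt₂, hnd₂⟩ := h₂
  have hnd₁' : ∀ v : V, v ≠ 0 → ∃ w, 0 < ω₁ v w := by
    intro v hv
    obtain ⟨w, hw⟩ := hnd₁ v hv
    rcases lt_or_gt_of_ne hw with hneg | hpos
    · exact ⟨-w, by rw [map_neg]; linarith⟩
    · exact ⟨w, hpos⟩
  have step1 : ∀ v w : V, 0 < ω₁ v w → 0 < ω₂ v w := by
    intro v w hvw
    obtain ⟨J, hJc, hJt, hJv⟩ :=
      exists_tame_fixing (Module.finrank ℝ V) V le_rfl ω₁ ⟨halt₁, hnd₁⟩ v w hvw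
    have hv0 : v ≠ 0 := by
      rintro rfl
      simp at hvw
    have := h J hJc hJt v hv0
    rwa [hJv] at this
  have step2a : ∀ v w : V, v ≠ 0 → ω₁ v w = 0 → 0 ≤ ω₂ v w := by
    intro v w hv hz
    obtain ⟨w₀, hw₀⟩ := hnd₁' v hv
    have hw₀2 : 0 < ω₂ v w₀ := step1 v w₀ hw₀
    by_contra hneg2
    push_neg at hneg2
    set t : ℝ := (-(ω₂ v w)) / (2 * ω₂ v w₀) with htdef
    have ht : 0 < t := div_pos (by linarith) (by linarith)
    have h1 : 0 < ω₁ v (t • w₀ + w) := by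
      rw [map_add, map_smul, smul_eq_mul, hz]
      have := mul_pos ht hw₀
      linarith
    have h2 := step1 v _ h1
    rw [map_add, map_smul, smul_eq_mul] at h2
    have he : t * ω₂ v w₀ = -(ω₂ v w) / 2 := by
      rw [htdef]
      field_simp
    rw [he] at h2
    linarith
  have step2 : ∀ v w : V, v ≠ 0 → ω₁ v w = 0 → ω₂ v w = 0 := by
    intro v w hv hz
    have ha := step2a v w hv hz
    have hb := step2a v (-w) hv (by rw [map_neg, hz, neg_zero])
    rw [map_neg] at hb
    linarith
  have step3 : ∀ v : V, v ≠ 0 → ∃ μ : ℝ, 0 < μ ∧ ∀ w, ω₂ v w = μ * ω₁ v w := by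
    intro v hv
    obtain ⟨w₀, hw₀⟩ := hnd₁' v hv
    have hw₀2 : 0 < ω₂ v w₀ := step1 v w₀ hw₀
    refine ⟨ω₂ v w₀ / ω₁ v w₀, div_pos hw₀2 hw₀, ?_⟩
    intro w
    have hr : ω₁ v (w - (ω₁ v w / ω₁ v w₀) • w₀) = 0 := by
      rw [map_sub, map_smul, smul_eq_mul]
      field_simp
      ring
    have h2 := step2 v _ hv hr
    rw [map_sub, map_smul, smul_eq_mul] at h2
    have : ω₂ v w = (ω₁ v w / ω₁ v w₀) * ω₂ v w₀ := by linarith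
    rw [this]
    field_simp
  by_cases hV : ∃ v₀ : V, v₀ ≠ 0
  · obtain ⟨v₀, hv₀⟩ := hV
    obtain ⟨lam, hlam, hfix⟩ := step3 v₀ hv₀
    have hall : ∀ u w : V, ω₂ u w = lam * ω₁ u w := by
      intro u w
      by_cases hu : u = 0
      · simp [hu]
      obtain ⟨μ, hμ, hμf⟩ := step3 u hu
      suffices hmueq : μ = lam by rw [hμf, hmueq]
      by_cases hk : ∃ k : ℝ, u = k • v₀
      · obtain ⟨k, rfl⟩ := hk
        obtain ⟨w₁, hw₁⟩ := hnd₁ (k • v₀) hu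
        have e1 := hμf w₁
        have e2 : ω₂ (k • v₀) w₁ = lam * ω₁ (k • v₀) w₁ := by
          rw [map_smul, map_smul, LinearMap.smul_apply, LinearMap.smul_apply,
            smul_eq_mul, smul_eq_mul, hfix w₁]
          ring
        apply mul_right_cancel₀ hw₁
        rw [← e1, e2]
      · have hknot' : ¬ ∃ k : ℝ, v₀ = k • u := by
          rintro ⟨k, hkk⟩
          have hk0 : k ≠ 0 := by
            rintro rfl
            rw [zero_smul] at hkk
            exact hv₀ hkk
          exact hk ⟨k⁻¹, by rw [hkk, smul_smul, inv_mul_cancel₀ hk0, one_smul]⟩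
        have hex1 : ∃ w, ω₁ v₀ w = 0 ∧ ω₁ u w ≠ 0 := by
          by_contra hcon
          push_neg at hcon
          obtain ⟨k, hkk⟩ := prop_of_ker_le ω₁ hnd₁ v₀ u hv₀ fun w hw =>
            by_contra fun hne => hne (hcon w hw) |>.elim
          exact hk ⟨k, hkk⟩
        have hex2 : ∃ w, ω₁ u w = 0 ∧ ω₁ v₀ w ≠ 0 := by
          by_contra hcon
          push_neg at hcon
          obtain ⟨k, hkk⟩ := prop_of_ker_le ω₁ hnd₁ u v₀ hu fun w hw =>
            by_contra fun hne => hne (hcon w hw) |>.elim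
          exact hknot' ⟨k, hkk⟩
        have hsum0 : u + v₀ ≠ 0 := by
          intro h0
          apply hk
          refine ⟨-1, ?_⟩
          have : u = -v₀ := by
            rw [eq_neg_iff_add_eq_zero]
            exact h0
          rw [this, neg_smul, one_smul]
        obtain ⟨ν, hν, hνf⟩ := step3 (u + v₀) hsum0
        obtain ⟨wa, hwa0, hwa⟩ := hex1
        obtain ⟨wb, hwb0, hwb⟩ := hex2
        have ea : μ = ν := by
          have e1 := hνf wa
          rw [map_add, LinearMap.add_apply, map_add, LinearMap.add_apply,
            hwa0, step2 v₀ wa hv₀ hwa0, hμf wa] at e1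
          apply mul_right_cancel₀ hwa
          rw [← add_zero (μ * ω₁ u wa), e1]
          ring
        have eb : lam = ν := by
          have e1 := hνf wb
          rw [map_add, LinearMap.add_apply, map_add, LinearMap.add_apply,
            hwb0, step2 u wb hu hwb0, hfix wb] at e1
          apply mul_right_cancel₀ hwb
          rw [← zero_add (lam * ω₁ v₀ wb), e1]
          ring
        rw [ea, eb]
    have heq : ω₂ = lam • ω₁ := by
      apply LinearMap.ext
      intro u
      apply LinearMap.ext
      intro w
      rw [LinearMap.smul_apply, LinearMap.smul_apply, smul_eq_mul, hall]
    refine ⟨lam, hlam, heq, ?_⟩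
    intro J hJc
    constructor
    · intro hT v hv
      rw [heq, LinearMap.smul_apply, LinearMap.smul_apply, smul_eq_mul]
      exact mul_pos hlam (hT v hv)
    · intro hT v hv
      have h' := hT v hv
      rw [heq, LinearMap.smul_apply, LinearMap.smul_apply, smul_eq_mul] at h'
      by_contra hle
      push_neg at hle
      have : lam * ω₁ v (J v) ≤ 0 := mul_nonpos_of_nonneg_of_nonpos hlam.le hle
      linarith
  · push_neg at hV
    refine ⟨1, one_pos, ?_, ?_⟩
    · apply LinearMap.ext
      intro u
      apply LinearMap.ext
      intro w
      rw [hV u]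
      simp
    · intro J hJc
      constructor <;> exact fun _ v hv => absurd (hV v) hv
end

section
/- Let V be a finite-dimensional real vector space and let ω₁ and ω₂ be linear symplectic forms on V. Assume that every complex structure J on V that is compatible with ω₁ is also compatible with ω₂. Then there exists a real number λ > 0 such that ω₂ = λ · ω₁; in particular the set of complex structures compatible with ω₁ coincides with the set of complex structures compatible with ω₂. -/
/-- `J` is compatible with `ω`: tamed by `ω` and `ω(Ju, Jv) = ω(u, v)`. -/
def CompatibleWith {V : Type*} [AddCommGroup V] [Module ℝ V]
    (ω : V →ₗ[ℝ] V →ₗ[ℝ] ℝ) (J : V →ₗ[ℝ] V) : Prop :=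
  (∀ v, v ≠ 0 → 0 < ω v (J v)) ∧ ∀ u v, ω (J u) (J v) = ω u v

namespace SympAux

open Matrix

abbrev Model (n : ℕ) := (Fin n → ℝ) × (Fin n → ℝ)

noncomputable def stdForm (n : ℕ) : Model n →ₗ[ℝ] Model n →ₗ[ℝ] ℝ :=
  LinearMap.mk₂ ℝ (fun u v => u.1 ⬝ᵥ v.2 - v.1 ⬝ᵥ u.2)
    (by intro m₁ m₂ v; simp [add_dotProduct, dotProduct_add]; ring)
    (by intro c m v; simp [smul_dotProduct, dotProduct_smul, smul_eq_mul]; ring)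
    (by intro m v₁ v₂; simp [add_dotProduct, dotProduct_add]; ring)
    (by intro c m v; simp [smul_dotProduct, dotProduct_smul, smul_eq_mul]; ring)

lemma stdForm_apply {n : ℕ} (u v : Model n) :
    stdForm n u v = u.1 ⬝ᵥ v.2 - v.1 ⬝ᵥ u.2 := rfl

lemma skew {V : Type*} [AddCommGroup V] [Module ℝ V] {ω : V →ₗ[ℝ] V →ₗ[ℝ] ℝ}
    (halt : ∀ v, ω v v = 0) (u v : V) : ω u v = - ω v u := by
  have h := halt (u + v)
  simp only [map_add, LinearMap.add_apply, halt u, halt v] at h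
  linarith

/-- Transfer of complex structures along a linear equivalence matching the forms. -/
lemma transfer {M V : Type*} [AddCommGroup M] [Module ℝ M] [AddCommGroup V] [Module ℝ V]
    (ω : V →ₗ[ℝ] V →ₗ[ℝ] ℝ) (σ : M →ₗ[ℝ] M →ₗ[ℝ] ℝ) (Φ : M ≃ₗ[ℝ] V)
    (hΦ : ∀ u v, ω (Φ u) (Φ v) = σ u v) (J : M →ₗ[ℝ] M)
    (hJc : IsComplexStructure J) (hJ : CompatibleWith σ J) :
    IsComplexStructure (Φ.toLinearMap ∘ₗ J ∘ₗ Φ.symm.toLinearMap) ∧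
    CompatibleWith ω (Φ.toLinearMap ∘ₗ J ∘ₗ Φ.symm.toLinearMap) := by
  refine ⟨?_, ?_, ?_⟩
  · intro v
    simp only [LinearMap.coe_comp, Function.comp_apply, LinearEquiv.coe_coe,
      LinearEquiv.symm_apply_apply, hJc (Φ.symm v), map_neg, LinearEquiv.apply_symm_apply]
  · intro v hv
    have h0 : Φ.symm v ≠ 0 := fun h => hv (by simpa using congrArg Φ h)
    have := hJ.1 _ h0
    have hrw : ω v (Φ (J (Φ.symm v))) = σ (Φ.symm v) (J (Φ.symm v)) := by
      conv_lhs => rw [show v = Φ (Φ.symm v) by simp]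
      rw [hΦ]
      simp
    simp only [LinearMap.coe_comp, Function.comp_apply, LinearEquiv.coe_coe]
    rw [hrw]
    · exact this
  · intro u v
    have h1 := hΦ (J (Φ.symm u)) (J (Φ.symm v))
    have h2 := hJ.2 (Φ.symm u) (Φ.symm v)
    have h3 := hΦ (Φ.symm u) (Φ.symm v)
    simp only [LinearEquiv.apply_symm_apply] at h3
    simp only [LinearMap.coe_comp, Function.comp_apply, LinearEquiv.coe_coe]
    rw [h1, h2, ← h3]

universe u

lemma darboux (n : ℕ) : ∀ (V : Type u) [AddCommGroup V] [Module ℝ V]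
    [FiniteDimensional ℝ V] (ω : V →ₗ[ℝ] V →ₗ[ℝ] ℝ), IsSymplecticForm ω →
    Module.finrank ℝ V ≤ n →
    ∃ (m : ℕ) (Φ : Model m ≃ₗ[ℝ] V), ∀ u v, ω (Φ u) (Φ v) = stdForm m u v := by
  induction n using Nat.strong_induction_on with
  | _ n IH =>
  intro V _ _ _ ω hω hr
  by_cases hs : ∀ v : V, v = 0
  · haveI : Subsingleton V := ⟨fun a b => by rw [hs a, hs b]⟩
    refine ⟨0, LinearEquiv.ofSubsingleton _ _, fun u v => ?_⟩
    haveI : Subsingleton (Model 0) := inferInstance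
    rw [Subsingleton.elim u 0, Subsingleton.elim v 0]
    simp
  · push_neg at hs
    obtain ⟨v₀, hv₀⟩ := hs
    obtain ⟨w₀, hw₀⟩ := hω.2 v₀ hv₀
    set w : V := (ω v₀ w₀)⁻¹ • w₀ with hw_def
    have hvw : ω v₀ w = 1 := by
      simp [hw_def, inv_mul_cancel₀ hw₀]
    have hwv : ω w v₀ = -1 := by rw [skew hω.1, hvw]
    set W : Submodule ℝ V := LinearMap.ker (LinearMap.prod (ω v₀) (ω w)) with hW_def
    have hmemW : ∀ u : V, u ∈ W ↔ ω v₀ u = 0 ∧ ω w u = 0 := by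
      intro u
      simp [hW_def, LinearMap.mem_ker, LinearMap.prod_apply, Prod.ext_iff]
    have hvnotW : v₀ ∉ W := by
      rw [hmemW]
      intro ⟨_, h2⟩
      rw [hwv] at h2; norm_num at h2
    have hWlt : W < ⊤ := lt_top_iff_ne_top.2 (fun h => hvnotW (h ▸ Submodule.mem_top))
    have hrk : Module.finrank ℝ W < n := lt_of_lt_of_le (Submodule.finrank_lt hWlt.ne) hr
    -- the restricted form is symplectic
    set ωW : W →ₗ[ℝ] W →ₗ[ℝ] ℝ := ω.domRestrict₁₂ W W with hωW_def
    have hωW_apply : ∀ u v : W, ωW u v = ω u v := fun u v => rfl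
    -- projection to W
    have hproj : ∀ u : V, (u - ω v₀ u • w + ω w u • v₀) ∈ W := by
      intro u
      rw [hmemW]
      constructor
      · simp [hω.1 v₀, hvw]
      · simp [hω.1 w, hwv]
    have hωW : IsSymplecticForm ωW := by
      constructor
      · intro v; exact hω.1 v
      · rintro ⟨u, hu⟩ hune
        have huV : (u : V) ≠ 0 := by
          simpa [Submodule.coe_eq_zero] using fun h => hune (by exact_mod_cast Subtype.ext h)
        obtain ⟨x, hx⟩ := hω.2 u huV
        obtain ⟨hu1, hu2⟩ := (hmemW u).1 hu
        have huw : ω u w = 0 := by rw [skew hω.1]; simp [hu2]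
        have huv : ω u v₀ = 0 := by rw [skew hω.1]; simp [hu1]
        refine ⟨⟨x - ω v₀ x • w + ω w x • v₀, hproj x⟩, ?_⟩
        rw [hωW_apply]
        simp only [map_add, map_sub, _root_.map_smul, smul_eq_mul, huw, huv, mul_zero, sub_zero, add_zero]
        exact hx
    obtain ⟨m, Ψ, hΨ⟩ := IH (Module.finrank ℝ W) hrk W ωW hωW le_rfl
    -- build the bigger equivalence
    have hΨW : ∀ p : Model m, (Ψ p : V) ∈ W := fun p => (Ψ p).2
    have hωvΨ : ∀ p : Model m, ω v₀ (Ψ p) = 0 := fun p => ((hmemW _).1 (hΨW p)).1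
    have hωwΨ : ∀ p : Model m, ω w (Ψ p) = 0 := fun p => ((hmemW _).1 (hΨW p)).2
    have hωΨv : ∀ p : Model m, ω (Ψ p) v₀ = 0 := by
      intro p; rw [skew hω.1]; simp [hωvΨ p]
    have hωΨw : ∀ p : Model m, ω (Ψ p) w = 0 := by
      intro p; rw [skew hω.1]; simp [hωwΨ p]
    set L : Model (m + 1) →ₗ[ℝ] V :=
      { toFun := fun p => p.1 (Fin.last m) • v₀ + p.2 (Fin.last m) • w +
          (Ψ (Fin.init p.1, Fin.init p.2) : V)
        map_add' := by
          intro p q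
          have h1 : (Fin.init (p.1 + q.1), Fin.init (p.2 + q.2)) =
              (Fin.init p.1, Fin.init p.2) + (Fin.init q.1, Fin.init q.2) := rfl
          simp only [Prod.fst_add, Prod.snd_add, Pi.add_apply, h1, map_add,
            Submodule.coe_add]
          module
        map_smul' := by
          intro c p
          have h1 : (Fin.init (c • p.1), Fin.init (c • p.2)) =
              c • (Fin.init p.1, Fin.init p.2) := rfl
          simp only [Prod.smul_fst, Prod.smul_snd, Pi.smul_apply, h1, _root_.map_smul,
            Submodule.coe_smul, smul_eq_mul, RingHom.id_apply]
          module } with hL_def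
    have hL_apply : ∀ p : Model (m+1), L p = p.1 (Fin.last m) • v₀ + p.2 (Fin.last m) • w +
          (Ψ (Fin.init p.1, Fin.init p.2) : V) := fun p => rfl
    have hLinj : Function.Injective L := by
      rw [injective_iff_map_eq_zero]
      intro p hp
      rw [hL_apply] at hp
      have e1 : ω v₀ (0 : V) = 0 := by simp
      rw [← hp] at e1
      simp only [map_add, _root_.map_smul, smul_eq_mul, hω.1 v₀, hvw, hωvΨ] at e1
      have hp2 : p.2 (Fin.last m) = 0 := by linarith [e1]
      have e2 : ω w (0 : V) = 0 := by simp
      rw [← hp] at e2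
      simp only [map_add, _root_.map_smul, smul_eq_mul, hω.1 w, hwv, hωwΨ] at e2
      have hp1 : p.1 (Fin.last m) = 0 := by linarith [e2]
      rw [hp1, hp2] at hp
      simp only [zero_smul, zero_add] at hp
      have hΨ0 : (Fin.init p.1, Fin.init p.2) = 0 := by
        apply Ψ.injective
        rw [map_zero]
        exact Subtype.ext (by simpa using hp)
      have h1 : Fin.init p.1 = 0 := congrArg Prod.fst hΨ0
      have h2 : Fin.init p.2 = 0 := congrArg Prod.snd hΨ0
      have hx : p.1 = 0 := by
        funext k
        refine Fin.lastCases ?_ ?_ k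
        · exact hp1
        · intro j; exact congrFun h1 j
      have hy : p.2 = 0 := by
        funext k
        refine Fin.lastCases ?_ ?_ k
        · exact hp2
        · intro j; exact congrFun h2 j
      exact Prod.ext_iff.mpr ⟨hx, hy⟩
    have hLsurj : Function.Surjective L := by
      intro u
      obtain ⟨q, hq⟩ := Ψ.surjective ⟨u - ω v₀ u • w + ω w u • v₀, hproj u⟩
      refine ⟨(Fin.snoc q.1 (-ω w u), Fin.snoc q.2 (ω v₀ u)), ?_⟩
      rw [hL_apply]
      simp only [Fin.snoc_last, Fin.init_snoc]
      have : (q.1, q.2) = q := rfl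
      rw [this, hq]
      simp only [map_neg, neg_smul]
      module
    set Φ : Model (m+1) ≃ₗ[ℝ] V := LinearEquiv.ofBijective L ⟨hLinj, hLsurj⟩ with hΦ_def
    refine ⟨m + 1, Φ, fun p q => ?_⟩
    have hΦ_apply : ∀ p, Φ p = L p := fun p => rfl
    have hst : ∀ a b : Model m, ω (Ψ a : V) (Ψ b : V) = stdForm m a b := by
      intro a b; rw [← hωW_apply]; exact hΨ a b
    rw [hΦ_apply, hΦ_apply, hL_apply, hL_apply]
    simp only [map_add, _root_.map_smul, LinearMap.add_apply, LinearMap.smul_apply, smul_eq_mul,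
      hω.1 v₀, hω.1 w, hvw, hwv, hωvΨ, hωwΨ, hωΨv, hωΨw, hst, stdForm_apply]
    simp only [dotProduct, Fin.sum_univ_castSucc]
    have hinit : ∀ (x : Fin (m+1) → ℝ) (j : Fin m), Fin.init x j = x j.castSucc :=
      fun x j => rfl
    simp only [hinit]
    ring

variable {n : ℕ}

noncomputable def eb (i : Fin n) : Model n := (Pi.single i 1, 0)
noncomputable def fb (i : Fin n) : Model n := (0, Pi.single i 1)

/-- The standard complex structure. -/
def J0 (n : ℕ) : Model n →ₗ[ℝ] Model n :=
  LinearMap.prod (-(LinearMap.snd ℝ _ _)) (LinearMap.fst ℝ _ _)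

lemma J0_apply (p : Model n) : J0 n p = (-p.2, p.1) := rfl

lemma J0_cs : IsComplexStructure (J0 n) := by
  intro p
  simp [J0_apply, Prod.ext_iff]

lemma dot_self_nonneg (x : Fin n → ℝ) : 0 ≤ x ⬝ᵥ x :=
  Finset.sum_nonneg fun i _ => mul_self_nonneg (x i)

lemma J0_compat : CompatibleWith (stdForm n) (J0 n) := by
  constructor
  · intro v hv
    rw [J0_apply, stdForm_apply]
    simp only [neg_dotProduct, sub_neg_eq_add]
    have h1 : 0 ≤ v.1 ⬝ᵥ v.1 := dot_self_nonneg v.1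
    have h2 : 0 ≤ v.2 ⬝ᵥ v.2 := dot_self_nonneg v.2
    rcases ne_or_eq v.1 0 with h | h
    · have : v.1 ⬝ᵥ v.1 ≠ 0 := fun hc => h (dotProduct_self_eq_zero.1 hc)
      nlinarith [lt_of_le_of_ne h1 (Ne.symm this)]
    · have hv2 : v.2 ≠ 0 := by
        intro hc; exact hv (Prod.ext_iff.2 ⟨h, hc⟩)
      have : v.2 ⬝ᵥ v.2 ≠ 0 := fun hc => hv2 (dotProduct_self_eq_zero.1 hc)
      nlinarith [lt_of_le_of_ne h2 (Ne.symm this)]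
  · intro u v
    rw [J0_apply, J0_apply, stdForm_apply, stdForm_apply]
    simp only [neg_dotProduct, dotProduct_neg]
    rw [dotProduct_comm u.2 v.1, dotProduct_comm v.2 u.1]
    ring

/-- Scaling-type linear map on a coordinate pair. -/
def sMap (i : Fin n) (a b : ℝ) : Model n →ₗ[ℝ] Model n where
  toFun p := (p.1 + (a * p.1 i) • (Pi.single i 1 : Fin n → ℝ), p.2 + (b * p.2 i) • (Pi.single i 1 : Fin n → ℝ))
  map_add' p q := by
    ext k <;> simp only [Prod.fst_add, Prod.snd_add, Pi.add_apply, Pi.smul_apply,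
      Pi.single_apply, smul_eq_mul] <;> split_ifs <;> ring
  map_smul' c p := by
    ext k <;> simp only [Prod.smul_fst, Prod.smul_snd, Pi.add_apply, Pi.smul_apply,
      Pi.single_apply, smul_eq_mul, RingHom.id_apply] <;> split_ifs <;> ring

lemma sMap_apply (i : Fin n) (a b : ℝ) (p : Model n) :
    sMap i a b p = (p.1 + (a * p.1 i) • (Pi.single i 1 : Fin n → ℝ), p.2 + (b * p.2 i) • (Pi.single i 1 : Fin n → ℝ)) := rfl

noncomputable def sEquiv (i : Fin n) : Model n ≃ₗ[ℝ] Model n :=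
  LinearEquiv.ofLinear (sMap i 1 (-1/2)) (sMap i (-1/2) 1)
    (by
      ext p k <;> simp only [LinearMap.coe_comp, Function.comp_apply, sMap_apply,
        LinearMap.id_coe, id_eq, Pi.add_apply, Pi.smul_apply, Pi.single_apply,
        smul_eq_mul] <;> split_ifs <;> ring)
    (by
      ext p k <;> simp only [LinearMap.coe_comp, Function.comp_apply, sMap_apply,
        LinearMap.id_coe, id_eq, Pi.add_apply, Pi.smul_apply, Pi.single_apply,
        smul_eq_mul] <;> split_ifs <;> ring)

lemma sEquiv_symp (i : Fin n) :
    ∀ u v, stdForm n (sEquiv i u) (sEquiv i v) = stdForm n u v := by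
  intro u v
  show stdForm n (sMap i 1 (-1/2) u) (sMap i 1 (-1/2) v) = stdForm n u v
  rw [sMap_apply, sMap_apply, stdForm_apply, stdForm_apply]
  simp only [add_dotProduct, dotProduct_add, smul_dotProduct, dotProduct_smul,
    dotProduct_single, single_dotProduct, smul_eq_mul, mul_one, one_mul,
    Pi.add_apply, Pi.smul_apply, Pi.single_eq_same]
  ring

/-- Hyperbolic-type linear map mixing the pairs `(i, i')` and `(j, j')`. -/
def hMap (i j : Fin n) (c s : ℝ) : Model n →ₗ[ℝ] Model n where
  toFun p := (p.1 + ((c - 1) * p.1 i + s * p.2 j) • (Pi.single i 1 : Fin n → ℝ)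
                  + ((c - 1) * p.1 j + s * p.2 i) • (Pi.single j 1 : Fin n → ℝ),
              p.2 + (s * p.1 j + (c - 1) * p.2 i) • (Pi.single i 1 : Fin n → ℝ)
                  + (s * p.1 i + (c - 1) * p.2 j) • (Pi.single j 1 : Fin n → ℝ))
  map_add' p q := by
    ext k <;> simp only [Prod.fst_add, Prod.snd_add, Pi.add_apply, Pi.smul_apply,
      Pi.single_apply, smul_eq_mul] <;> split_ifs <;> ring
  map_smul' c' p := by
    ext k <;> simp only [Prod.smul_fst, Prod.smul_snd, Pi.add_apply, Pi.smul_apply,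
      Pi.single_apply, smul_eq_mul, RingHom.id_apply] <;> split_ifs <;> ring

lemma hMap_apply (i j : Fin n) (c s : ℝ) (p : Model n) : hMap i j c s p =
    (p.1 + ((c - 1) * p.1 i + s * p.2 j) • (Pi.single i 1 : Fin n → ℝ)
         + ((c - 1) * p.1 j + s * p.2 i) • (Pi.single j 1 : Fin n → ℝ),
     p.2 + (s * p.1 j + (c - 1) * p.2 i) • (Pi.single i 1 : Fin n → ℝ)
         + (s * p.1 i + (c - 1) * p.2 j) • (Pi.single j 1 : Fin n → ℝ)) := rfl

noncomputable def hEquiv (i j : Fin n) (hij : i ≠ j) : Model n ≃ₗ[ℝ] Model n :=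
  LinearEquiv.ofLinear (hMap i j (5/3) (4/3)) (hMap i j (5/3) (-(4/3)))
    (by
      refine LinearMap.ext fun p => ?_
      simp only [LinearMap.comp_apply, hMap_apply, LinearMap.id_apply]
      refine Prod.ext ?_ ?_ <;> funext k <;>
        simp only [Pi.add_apply, Pi.smul_apply, Pi.single_apply, smul_eq_mul] <;>
        split_ifs <;> first | ring1 | (exfalso; omega))
    (by
      refine LinearMap.ext fun p => ?_
      simp only [LinearMap.comp_apply, hMap_apply, LinearMap.id_apply]
      refine Prod.ext ?_ ?_ <;> funext k <;>
        simp only [Pi.add_apply, Pi.smul_apply, Pi.single_apply, smul_eq_mul] <;>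
        split_ifs <;> first | ring1 | (exfalso; omega))

lemma hEquiv_symp (i j : Fin n) (hij : i ≠ j) :
    ∀ u v, stdForm n (hEquiv i j hij u) (hEquiv i j hij v) = stdForm n u v := by
  intro u v
  show stdForm n (hMap i j (5/3) (4/3) u) (hMap i j (5/3) (4/3) v) = stdForm n u v
  rw [hMap_apply, hMap_apply, stdForm_apply, stdForm_apply]
  simp only [add_dotProduct, dotProduct_add, smul_dotProduct, dotProduct_smul,
    dotProduct_single, single_dotProduct, smul_eq_mul, mul_one, one_mul,
    Pi.add_apply, Pi.smul_apply, Pi.single_eq_same, Pi.single_eq_of_ne hij,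
    Pi.single_eq_of_ne hij.symm]
  ring

lemma eb_ne_zero (i : Fin n) : eb i ≠ 0 := by
  intro h
  have := congrFun (congrArg Prod.fst h) i
  simp [eb] at this

lemma J0_eb (i : Fin n) : J0 n (eb i) = fb i := by
  simp [J0_apply, eb, fb, Prod.ext_iff]

lemma J0_fb (i : Fin n) : J0 n (fb i) = -(eb i) := by
  simp [J0_apply, eb, fb, Prod.ext_iff]

noncomputable def JsC (i : Fin n) : Model n →ₗ[ℝ] Model n :=
  (sEquiv i).toLinearMap ∘ₗ J0 n ∘ₗ (sEquiv i).symm.toLinearMap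

lemma JsC_apply (i : Fin n) (p : Model n) :
    JsC i p = sMap i 1 (-1/2) (J0 n (sMap i (-1/2) 1 p)) := rfl

lemma JsC_eb_same (i : Fin n) : JsC i (eb i) = (1/4 : ℝ) • fb i := by
  rw [JsC_apply, sMap_apply, J0_apply, sMap_apply]
  refine Prod.ext (funext fun k => ?_) (funext fun k => ?_) <;>
    simp [eb, fb, Pi.single_apply] <;> (try split_ifs) <;>
    first
    | (exfalso; omega)
    | rfl
    | (norm_num; done)
    | (simp_all [Pi.single_apply]; try norm_num)

lemma JsC_fb_same (i : Fin n) : JsC i (fb i) = -((4 : ℝ) • eb i) := by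
  rw [JsC_apply, sMap_apply, J0_apply, sMap_apply]
  refine Prod.ext (funext fun k => ?_) (funext fun k => ?_) <;>
    simp [eb, fb, Pi.single_apply] <;> (try split_ifs) <;>
    first
    | (exfalso; omega)
    | rfl
    | (norm_num; done)
    | (simp_all [Pi.single_apply]; try norm_num)

lemma JsC_eb_ne (i j : Fin n) (hji : j ≠ i) : JsC i (eb j) = fb j := by
  rw [JsC_apply, sMap_apply, J0_apply, sMap_apply]
  refine Prod.ext (funext fun k => ?_) (funext fun k => ?_) <;>
    simp [eb, fb, Pi.single_apply] <;> (try split_ifs) <;>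
    first
    | (exfalso; omega)
    | rfl
    | (norm_num; done)
    | (simp_all [Pi.single_apply]; try norm_num)

lemma JsC_fb_ne (i j : Fin n) (hji : j ≠ i) : JsC i (fb j) = -(eb j) := by
  rw [JsC_apply, sMap_apply, J0_apply, sMap_apply]
  refine Prod.ext (funext fun k => ?_) (funext fun k => ?_) <;>
    simp [eb, fb, Pi.single_apply] <;> (try split_ifs) <;>
    first
    | (exfalso; omega)
    | rfl
    | (norm_num; done)
    | (simp_all [Pi.single_apply]; try norm_num)

noncomputable def JhC (i j : Fin n) (hij : i ≠ j) : Model n →ₗ[ℝ] Model n :=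
  (hEquiv i j hij).toLinearMap ∘ₗ J0 n ∘ₗ (hEquiv i j hij).symm.toLinearMap

lemma JhC_apply (i j : Fin n) (hij : i ≠ j) (p : Model n) :
    JhC i j hij p = hMap i j (5/3) (4/3) (J0 n (hMap i j (5/3) (-(4/3)) p)) := rfl

lemma JhC_eb (i j : Fin n) (hij : i ≠ j) :
    JhC i j hij (eb i) = (40/9 : ℝ) • eb j + (41/9 : ℝ) • fb i := by
  rw [JhC_apply, hMap_apply, J0_apply, hMap_apply]
  refine Prod.ext (funext fun k => ?_) (funext fun k => ?_) <;>
    simp [eb, fb, Pi.single_apply] <;> (try split_ifs) <;>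
    first
    | (exfalso; omega)
    | rfl
    | (norm_num; done)
    | (simp_all [Pi.single_apply]; try norm_num)

lemma JhC_fb (i j : Fin n) (hij : i ≠ j) :
    JhC i j hij (fb i) = -((41/9 : ℝ) • eb i) - (40/9 : ℝ) • fb j := by
  rw [JhC_apply, hMap_apply, J0_apply, hMap_apply]
  refine Prod.ext (funext fun k => ?_) (funext fun k => ?_) <;>
    simp [eb, fb, Pi.single_apply] <;> (try split_ifs) <;>
    first
    | (exfalso; omega)
    | rfl
    | (norm_num; done)
    | (simp_all [Pi.single_apply]; try norm_num)

lemma model_core (B : Model n →ₗ[ℝ] Model n →ₗ[ℝ] ℝ) (halt : ∀ v, B v v = 0)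
    (H : ∀ J : Model n →ₗ[ℝ] Model n, IsComplexStructure J →
      CompatibleWith (stdForm n) J → CompatibleWith B J) (i0 : Fin n) :
    0 < B (eb i0) (fb i0) ∧ B = B (eb i0) (fb i0) • stdForm n := by
  have hskew : ∀ u v, B u v = -B v u := skew halt
  have hB0 := H (J0 n) J0_cs J0_compat
  have hpos : 0 < B (eb i0) (fb i0) := by
    have := hB0.1 (eb i0) (eb_ne_zero i0)
    rwa [J0_eb] at this
  -- off-diagonal vanishing
  have hoff : ∀ i j : Fin n, i ≠ j →
      B (eb i) (eb j) = 0 ∧ B (fb i) (fb j) = 0 ∧ B (eb i) (fb j) = 0 ∧ B (fb i) (eb j) = 0 := by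
    intro i j hij
    have hJs := transfer (stdForm n) (stdForm n) (sEquiv i) (sEquiv_symp i) (J0 n) J0_cs J0_compat
    have hBs := H _ hJs.1 hJs.2
    have hBsJ : ∀ u v, B (JsC i u) (JsC i v) = B u v := hBs.2
    have E1 : B (fb i) (fb j) = B (eb i) (eb j) := by
      have := hB0.2 (eb i) (eb j); rwa [J0_eb, J0_eb] at this
    have E2 : (1/4 : ℝ) * B (fb i) (fb j) = B (eb i) (eb j) := by
      have := hBsJ (eb i) (eb j)
      rwa [JsC_eb_same, JsC_eb_ne i j (Ne.symm hij), _root_.map_smul, LinearMap.smul_apply,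
        smul_eq_mul] at this
    have hff : B (fb i) (fb j) = 0 := by linarith
    have hee : B (eb i) (eb j) = 0 := by linarith
    have E3 : -B (fb i) (eb j) = B (eb i) (fb j) := by
      have := hB0.2 (eb i) (fb j)
      rwa [J0_eb, J0_fb, map_neg] at this
    have E4 : -((1/4 : ℝ) * B (fb i) (eb j)) = B (eb i) (fb j) := by
      have := hBsJ (eb i) (fb j)
      rwa [JsC_eb_same, JsC_fb_ne i j (Ne.symm hij), _root_.map_smul, LinearMap.smul_apply,
        map_neg, smul_eq_mul, mul_neg] at this
    have hfe : B (fb i) (eb j) = 0 := by linarith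
    have hef : B (eb i) (fb j) = 0 := by linarith
    exact ⟨hee, hff, hef, hfe⟩
  -- diagonal entries are all equal
  have hdiag : ∀ i j : Fin n, B (eb i) (fb i) = B (eb j) (fb j) := by
    intro i j
    rcases eq_or_ne i j with rfl | hij
    · rfl
    have hJh := transfer (stdForm n) (stdForm n) (hEquiv i j hij) (hEquiv_symp i j hij)
      (J0 n) J0_cs J0_compat
    have hBh := H _ hJh.1 hJh.2
    have E5 : B (JhC i j hij (eb i)) (JhC i j hij (fb i)) = B (eb i) (fb i) := hBh.2 _ _
    rw [JhC_eb, JhC_fb] at E5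
    have hz1 : B (eb j) (eb i) = 0 := (hoff j i (Ne.symm hij)).1
    have hz2 : B (fb i) (fb j) = 0 := (hoff i j hij).2.1
    have hfe : B (fb i) (eb i) = -B (eb i) (fb i) := by rw [hskew]
    have hef2 : B (eb j) (fb j) = B (eb j) (fb j) := rfl
    simp only [map_add, map_neg, map_sub, _root_.map_smul, LinearMap.add_apply,
      LinearMap.neg_apply, LinearMap.sub_apply, LinearMap.smul_apply, smul_eq_mul,
      hz1, hz2, hfe] at E5
    nlinarith [E5]
  refine ⟨hpos, ?_⟩
  set lam := B (eb i0) (fb i0) with hlam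
  -- basis
  set bP : Module.Basis (Fin n ⊕ Fin n) ℝ (Model n) :=
    (Pi.basisFun ℝ (Fin n)).prod (Pi.basisFun ℝ (Fin n)) with hbP
  have hbl : ∀ i, bP (Sum.inl i) = eb i := by
    intro i
    apply Prod.ext <;> simp [hbP, eb, Pi.basisFun_apply]
  have hbr : ∀ i, bP (Sum.inr i) = fb i := by
    intro i
    apply Prod.ext <;> simp [hbP, fb, Pi.basisFun_apply]
  apply LinearMap.ext_basis bP bP
  rintro (i | i) (j | j)
  · rw [hbl, hbl]
    have hz : stdForm n (eb i) (eb j) = 0 := by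
      simp [stdForm_apply, eb]
    rw [LinearMap.smul_apply, LinearMap.smul_apply, hz, smul_zero]
    rcases eq_or_ne i j with rfl | hij
    · exact halt _
    · exact (hoff i j hij).1
  · rw [hbl, hbr]
    have hstd : stdForm n (eb i) (fb j) = if j = i then 1 else 0 := by
      simp [stdForm_apply, eb, fb, dotProduct_single, Pi.single_apply]
    rw [LinearMap.smul_apply, LinearMap.smul_apply, hstd, smul_eq_mul]
    rcases eq_or_ne i j with rfl | hij
    · simp [hdiag i i0, hlam]
    · simp [Ne.symm hij, (hoff i j hij).2.2.1]
  · rw [hbr, hbl]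
    have hstd : stdForm n (fb i) (eb j) = if i = j then -1 else 0 := by
      simp only [stdForm_apply, eb, fb, dotProduct_single, Pi.single_apply,
        zero_dotProduct, dotProduct_zero, mul_one]
      split_ifs <;> norm_num
    rw [LinearMap.smul_apply, LinearMap.smul_apply, hstd, smul_eq_mul]
    rcases eq_or_ne i j with rfl | hij
    · rw [hskew]
      simp [hdiag i i0, hlam]
    · simp [hij, (hoff i j hij).2.2.2]
  · rw [hbr, hbr]
    have hz : stdForm n (fb i) (fb j) = 0 := by
      simp [stdForm_apply, fb]
    rw [LinearMap.smul_apply, LinearMap.smul_apply, hz, smul_zero]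
    rcases eq_or_ne i j with rfl | hij
    · exact halt _
    · exact (hoff i j hij).2.1

lemma compat_smul_iff {V : Type*} [AddCommGroup V] [Module ℝ V]
    (ω₁ : V →ₗ[ℝ] V →ₗ[ℝ] ℝ) (lam : ℝ) (hlam : 0 < lam) (J : V →ₗ[ℝ] V) :
    CompatibleWith ω₁ J ↔ CompatibleWith (lam • ω₁) J := by
  have happ : ∀ u v : V, (lam • ω₁) u v = lam * ω₁ u v := by
    intro u v; simp
  constructor
  · rintro ⟨h1, h2⟩
    refine ⟨fun v hv => ?_, fun u v => ?_⟩
    · rw [happ]; exact mul_pos hlam (h1 v hv)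
    · rw [happ, happ, h2]
  · rintro ⟨h1, h2⟩
    refine ⟨fun v hv => ?_, fun u v => ?_⟩
    · have := h1 v hv; rw [happ] at this; nlinarith
    · have := h2 u v; rw [happ, happ] at this
      exact mul_left_cancel₀ (ne_of_gt hlam) this

end SympAux

open SympAux

theorem compatibility_determines_form_up_to_positive_scalar
    {V : Type*} [AddCommGroup V] [Module ℝ V] [FiniteDimensional ℝ V]
    (ω₁ ω₂ : V →ₗ[ℝ] V →ₗ[ℝ] ℝ)
    (h₁ : IsSymplecticForm ω₁) (h₂ : IsSymplecticForm ω₂)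
    (h : ∀ J : V →ₗ[ℝ] V, IsComplexStructure J → CompatibleWith ω₁ J →
      CompatibleWith ω₂ J) :
    ∃ lam : ℝ, 0 < lam ∧ ω₂ = lam • ω₁ ∧
      ∀ J : V →ₗ[ℝ] V, IsComplexStructure J →
        (CompatibleWith ω₁ J ↔ CompatibleWith ω₂ J) := by
  rcases subsingleton_or_nontrivial V with hV | hV
  · have hz : ω₂ = (1 : ℝ) • ω₁ := by
      apply LinearMap.ext; intro u; apply LinearMap.ext; intro v
      rw [Subsingleton.elim u 0]
      simp
    refine ⟨1, one_pos, hz, fun J hJ => ?_⟩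
    rw [hz]
    exact compat_smul_iff ω₁ 1 one_pos J
  · obtain ⟨m, Φ, hΦ⟩ := darboux (Module.finrank ℝ V) V ω₁ h₁ le_rfl
    have hm : m ≠ 0 := by
      rintro rfl
      haveI : Subsingleton (Model 0) := inferInstance
      have hsub : Subsingleton V :=
        ⟨fun a b => by
          rw [← Φ.apply_symm_apply a, ← Φ.apply_symm_apply b,
            Subsingleton.elim (Φ.symm a) (Φ.symm b)]⟩
      exact absurd hsub (not_subsingleton V)
    set i0 : Fin m := ⟨0, Nat.pos_of_ne_zero hm⟩ with hi0
    set B : Model m →ₗ[ℝ] Model m →ₗ[ℝ] ℝ := ω₂.compl₁₂ Φ.toLinearMap Φ.toLinearMap with hB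
    have hBapp : ∀ u v, B u v = ω₂ (Φ u) (Φ v) := by
      intro u v; simp [hB, LinearMap.compl₁₂_apply]
    have haltB : ∀ v, B v v = 0 := fun v => by rw [hBapp]; exact h₂.1 _
    have H : ∀ J : Model m →ₗ[ℝ] Model m, IsComplexStructure J →
        CompatibleWith (stdForm m) J → CompatibleWith B J := by
      intro J hJc hJcompat
      obtain ⟨hc1, hc2⟩ := transfer ω₁ (stdForm m) Φ hΦ J hJc hJcompat
      have h2 := h _ hc1 hc2
      have hΦ' : ∀ u v, B (Φ.symm u) (Φ.symm v) = ω₂ u v := by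
        intro u v; rw [hBapp]; simp
      obtain ⟨hc1', hc2'⟩ := transfer B ω₂ Φ.symm hΦ' _ hc1 h2
      have hJeq : Φ.symm.toLinearMap ∘ₗ
          (Φ.toLinearMap ∘ₗ J ∘ₗ Φ.symm.toLinearMap) ∘ₗ Φ.symm.symm.toLinearMap = J := by
        apply LinearMap.ext; intro v; simp
      rwa [hJeq] at hc2'
    obtain ⟨hpos, hBeq⟩ := model_core B haltB H i0
    set lam := B (eb i0) (fb i0) with hlam
    have hz : ω₂ = lam • ω₁ := by
      apply LinearMap.ext; intro u; apply LinearMap.ext; intro v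
      have h1 : ω₂ u v = B (Φ.symm u) (Φ.symm v) := by rw [hBapp]; simp
      rw [LinearMap.smul_apply, LinearMap.smul_apply, h1, hBeq,
        LinearMap.smul_apply, LinearMap.smul_apply]
      rw [← hΦ (Φ.symm u) (Φ.symm v), Φ.apply_symm_apply, Φ.apply_symm_apply]
    exact ⟨lam, hpos, hz, fun J hJ => by rw [hz]; exact compat_smul_iff ω₁ lam hpos J⟩
end

section
/- Let V be a finite-dimensional real vector space of dimension at least 4, and let ω₁ and ω₂ be linear symplectic forms on V such that every complex structure compatible with ω₁ is tamed by ω₂. Then for every pair of linearly independent vectors v, w ∈ V one has ω₁(v, w) = 0 if and only if ω₂(v, w) = 0. -/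
open LinearMap Submodule

section Aux

variable {V : Type*} [AddCommGroup V] [Module ℝ V]

private lemma skew (ω : V →ₗ[ℝ] V →ₗ[ℝ] ℝ) (halt : ∀ x, ω x x = 0)
    (u v : V) : ω u v = - ω v u := by
  have h := halt (u + v)
  simp only [map_add, LinearMap.add_apply, halt u, halt v] at h
  linarith

/-- The projection onto the symplectic complement of `span {e, f}`. -/
private noncomputable def piMap (ω : V →ₗ[ℝ] V →ₗ[ℝ] ℝ) (e f : V) : V →ₗ[ℝ] V :=
  LinearMap.id - ((ω.flip f).smulRight e) - ((ω e).smulRight f)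

private lemma piMap_apply (ω : V →ₗ[ℝ] V →ₗ[ℝ] ℝ) (e f u : V) :
    piMap ω e f u = u - ω u f • e - ω e u • f := by
  simp [_root_.piMap]

private lemma piMap_mem (ω : V →ₗ[ℝ] V →ₗ[ℝ] ℝ) (halt : ∀ x, ω x x = 0)
    (e f : V) (hef : ω e f = 1) (u : V) :
    piMap ω e f u ∈ (ker (ω e) ⊓ ker (ω f)) := by
  have hfe : ω f e = -1 := by rw [skew ω halt, hef]
  refine Submodule.mem_inf.2 ⟨?_, ?_⟩ <;> rw [LinearMap.mem_ker, piMap_apply]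
  · simp [hef, halt e]
  · simp only [map_sub, map_smul, smul_eq_mul, hfe, halt f]
    have := skew ω halt f u
    linarith

set_option maxHeartbeats 1000000 in
private lemma step (ω : V →ₗ[ℝ] V →ₗ[ℝ] ℝ) (halt : ∀ x, ω x x = 0)
    (e f : V) (hef : ω e f = 1)
    (JW : ↥(ker (ω e) ⊓ ker (ω f)) →ₗ[ℝ] ↥(ker (ω e) ⊓ ker (ω f)))
    (hJW : IsComplexStructure JW)
    (hJWc : CompatibleWith
      (ω.compl₁₂ (ker (ω e) ⊓ ker (ω f)).subtype (ker (ω e) ⊓ ker (ω f)).subtype) JW) :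
    ∃ J : V →ₗ[ℝ] V, IsComplexStructure J ∧ CompatibleWith ω J ∧ J e = f := by
  have hfe : ω f e = -1 := by rw [skew ω halt, hef]
  have hWe : ∀ x : ↥(ker (ω e) ⊓ ker (ω f)), ω e (x : V) = 0 := fun x =>
    LinearMap.mem_ker.1 (Submodule.mem_inf.1 x.2).1
  have hWf : ∀ x : ↥(ker (ω e) ⊓ ker (ω f)), ω f (x : V) = 0 := fun x =>
    LinearMap.mem_ker.1 (Submodule.mem_inf.1 x.2).2
  have hWe' : ∀ x : ↥(ker (ω e) ⊓ ker (ω f)), ω (x : V) e = 0 := fun x => by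
    rw [skew ω halt, hWe x, neg_zero]
  have hWf' : ∀ x : ↥(ker (ω e) ⊓ ker (ω f)), ω (x : V) f = 0 := fun x => by
    rw [skew ω halt, hWf x, neg_zero]
  set π' : V →ₗ[ℝ] ↥(ker (ω e) ⊓ ker (ω f)) :=
    LinearMap.codRestrict (ker (ω e) ⊓ ker (ω f)) (piMap ω e f) (piMap_mem ω halt e f hef)
    with hπ'def
  have hπ : ∀ u : V, ((π' u : V)) = u - ω u f • e - ω e u • f := by
    intro u
    rw [hπ'def, LinearMap.codRestrict_apply, piMap_apply]
  set J : V →ₗ[ℝ] V := ((ω.flip f).smulRight f) - ((ω e).smulRight e)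
      + (ker (ω e) ⊓ ker (ω f)).subtype ∘ₗ JW ∘ₗ π'
    with hJdef
  have hJapp : ∀ u : V, J u = ω u f • f - ω e u • e + (JW (π' u) : V) := by
    intro u
    simp [hJdef]
  have hωW : ∀ x y : ↥(ker (ω e) ⊓ ker (ω f)),
      (ω.compl₁₂ (ker (ω e) ⊓ ker (ω f)).subtype (ker (ω e) ⊓ ker (ω f)).subtype) x y
        = ω (x : V) (y : V) := by
    intro x y
    simp [LinearMap.compl₁₂_apply]
  -- value computations
  have haJ : ∀ u : V, ω (J u) f = - ω e u := by
    intro u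
    rw [hJapp u]
    simp only [map_add, map_sub, map_smul, LinearMap.add_apply, LinearMap.sub_apply,
      LinearMap.smul_apply, smul_eq_mul, halt f, hef, hWf' (JW (π' u))]
    ring
  have hbJ : ∀ u : V, ω e (J u) = ω u f := by
    intro u
    rw [hJapp u]
    simp only [map_add, map_sub, map_smul, smul_eq_mul, halt e, hef, hWe (JW (π' u))]
    ring
  have hπJ : ∀ u : V, π' (J u) = JW (π' u) := by
    intro u
    apply Subtype.ext
    rw [hπ (J u), haJ u, hbJ u, hJapp u]
    module
  have hcs : IsComplexStructure J := by
    intro u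
    rw [hJapp (J u), haJ u, hbJ u, hπJ u, hJW (π' u)]
    have hneg : ((-(π' u) : ↥(ker (ω e) ⊓ ker (ω f))) : V) = -((π' u : V)) := rfl
    rw [hneg, hπ u]
    module
  have hcompat2 : ∀ u v : V, ω (J u) (J v) = ω u v := by
    intro u v
    have hjj : ω ((JW (π' u)) : V) ((JW (π' v)) : V) = ω ((π' u) : V) ((π' v) : V) := by
      have h := hJWc.2 (π' u) (π' v)
      rwa [hωW, hωW] at h
    have hpp : ω ((π' u) : V) ((π' v) : V)
        = ω u v + ω v f * ω e u - ω u f * ω e v := by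
      rw [hπ u, hπ v]
      simp only [map_sub, map_smul, LinearMap.sub_apply, LinearMap.smul_apply, smul_eq_mul,
        halt e, halt f, hef, hfe, skew ω halt u e, skew ω halt f v]
      ring
    rw [hJapp u, hJapp v]
    simp only [map_add, map_sub, map_smul, LinearMap.add_apply, LinearMap.sub_apply,
      LinearMap.smul_apply, smul_eq_mul, halt e, halt f, hef, hfe,
      hWe (JW (π' v)), hWf (JW (π' v)), hWe' (JW (π' u)), hWf' (JW (π' u)), hjj, hpp]
    ring
  have hu_decomp : ∀ u : V, u = ((π' u : V)) + ω u f • e + ω e u • f := by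
    intro u
    rw [hπ u]
    module
  have htame : ∀ u : V, u ≠ 0 → 0 < ω u (J u) := by
    intro u hu
    have hval : ω u (J u)
        = ω u f * ω u f + ω e u * ω e u + ω ((π' u) : V) ((JW (π' u)) : V) := by
      rw [hJapp u]
      nth_rewrite 1 [hu_decomp u]
      simp only [map_add, map_sub, map_smul, LinearMap.add_apply, LinearMap.sub_apply,
        LinearMap.smul_apply, smul_eq_mul, halt e, halt f, hef, hfe,
        hWe (JW (π' u)), hWf (JW (π' u)), hWe' (π' u), hWf' (π' u)]
      ring
    by_cases hp : π' u = 0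
    · have hab : ¬ (ω u f = 0 ∧ ω e u = 0) := by
        rintro ⟨h1, h2⟩
        apply hu
        rw [hu_decomp u, h1, h2, hp]
        simp
      have hz : ω ((π' u) : V) ((JW (π' u)) : V) = 0 := by
        rw [hp]
        simp
      rw [hval, hz]
      rcases (not_and_or.1 hab) with h1 | h1
      · nlinarith [mul_self_pos.2 h1, mul_self_nonneg (ω e u)]
      · nlinarith [mul_self_pos.2 h1, mul_self_nonneg (ω u f)]
    · have hpos : 0 < ω ((π' u) : V) ((JW (π' u)) : V) := by
        have := hJWc.1 (π' u) hp
        rwa [hωW] at this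
      rw [hval]
      nlinarith [mul_self_nonneg (ω u f), mul_self_nonneg (ω e u)]
  have hJe : J e = f := by
    have hπe : π' e = 0 := by
      apply Subtype.ext
      rw [hπ e, hef, halt e]
      simp
    rw [hJapp e, hπe, hef, halt e]
    simp
  exact ⟨J, hcs, ⟨htame, hcompat2⟩, hJe⟩

private lemma restrict_symplectic (ω : V →ₗ[ℝ] V →ₗ[ℝ] ℝ) (hω : IsSymplecticForm ω)
    (e f : V) (hef : ω e f = 1) :
    IsSymplecticForm
      (ω.compl₁₂ (ker (ω e) ⊓ ker (ω f)).subtype (ker (ω e) ⊓ ker (ω f)).subtype) := by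
  obtain ⟨halt, hnd⟩ := hω
  have hWe : ∀ x : ↥(ker (ω e) ⊓ ker (ω f)), ω e (x : V) = 0 := fun x =>
    LinearMap.mem_ker.1 (Submodule.mem_inf.1 x.2).1
  have hWf : ∀ x : ↥(ker (ω e) ⊓ ker (ω f)), ω f (x : V) = 0 := fun x =>
    LinearMap.mem_ker.1 (Submodule.mem_inf.1 x.2).2
  constructor
  · intro x
    simp [LinearMap.compl₁₂_apply, halt]
  · intro x hx
    have hx0 : (x : V) ≠ 0 := fun h => hx (Subtype.ext h)
    obtain ⟨u, hu⟩ := hnd (x : V) hx0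
    refine ⟨LinearMap.codRestrict (ker (ω e) ⊓ ker (ω f)) (piMap ω e f)
      (piMap_mem ω halt e f hef) u, ?_⟩
    simp only [LinearMap.compl₁₂_apply, Submodule.subtype_apply, LinearMap.codRestrict_apply,
      piMap_apply]
    have h1 : ω (x : V) e = 0 := by rw [skew ω halt, hWe x, neg_zero]
    have h2 : ω (x : V) f = 0 := by rw [skew ω halt, hWf x, neg_zero]
    simp only [map_sub, map_smul, smul_eq_mul, h1, h2]
    simpa using hu

end Aux

universe u

private lemma exists_compatible_aux :
    ∀ (n : ℕ) (V : Type u) [AddCommGroup V] [Module ℝ V] [FiniteDimensional ℝ V],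
      Module.finrank ℝ V = n → ∀ ω : V →ₗ[ℝ] V →ₗ[ℝ] ℝ, IsSymplecticForm ω →
      ∃ J : V →ₗ[ℝ] V, IsComplexStructure J ∧ CompatibleWith ω J := by
  intro n
  induction n using Nat.strong_induction_on with
  | _ n ih =>
    intro V _ _ _ hn ω hω
    by_cases hV : ∀ v : V, v = 0
    · refine ⟨0, ?_, ?_, ?_⟩
      · intro v; rw [hV v]; simp
      · intro v hv; exact absurd (hV v) hv
      · intro u v; rw [hV u]; simp
    · push_neg at hV
      obtain ⟨e, he⟩ := hV
      obtain ⟨f₀, hf₀⟩ := hω.2 e he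
      set f : V := (ω e f₀)⁻¹ • f₀ with hfdef
      have hef : ω e f = 1 := by
        rw [hfdef, map_smul, smul_eq_mul, inv_mul_cancel₀ hf₀]
      set W := LinearMap.ker (ω e) ⊓ LinearMap.ker (ω f) with hWdef
      have hfW : f ∉ W := by
        intro hmem
        rw [hWdef, Submodule.mem_inf, LinearMap.mem_ker, LinearMap.mem_ker] at hmem
        rw [hmem.1] at hef
        exact one_ne_zero hef.symm
      have hlt : Module.finrank ℝ W < n := by
        rw [← hn]
        exact Submodule.finrank_lt (fun (h : W = ⊤) => hfW (by rw [h]; exact Submodule.mem_top))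
      obtain ⟨JW, hJW, hJWc⟩ := ih (Module.finrank ℝ W) hlt W rfl
        (ω.compl₁₂ W.subtype W.subtype) (restrict_symplectic ω hω e f hef)
      obtain ⟨J, h1, h2, _⟩ := step ω hω.1 e f hef JW hJW hJWc
      exact ⟨J, h1, h2⟩

private lemma exists_compatible_pair {V : Type u} [AddCommGroup V] [Module ℝ V]
    [FiniteDimensional ℝ V]
    (ω : V →ₗ[ℝ] V →ₗ[ℝ] ℝ) (hω : IsSymplecticForm ω)
    (e f : V) (hef : ω e f = 1) :
    ∃ J : V →ₗ[ℝ] V, IsComplexStructure J ∧ CompatibleWith ω J ∧ J e = f := by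
  set W := LinearMap.ker (ω e) ⊓ LinearMap.ker (ω f) with hWdef
  obtain ⟨JW, hJW, hJWc⟩ := exists_compatible_aux (Module.finrank ℝ W) W rfl
    (ω.compl₁₂ W.subtype W.subtype) (restrict_symplectic ω hω e f hef)
  exact step ω hω.1 e f hef JW hJW hJWc

theorem vanishing_is_common_for_taming_forms
    {V : Type*} [AddCommGroup V] [Module ℝ V] [FiniteDimensional ℝ V]
    (hdim : 4 ≤ Module.finrank ℝ V)
    (ω₁ ω₂ : V →ₗ[ℝ] V →ₗ[ℝ] ℝ)
    (h₁ : IsSymplecticForm ω₁) (h₂ : IsSymplecticForm ω₂)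
    (h : ∀ J : V →ₗ[ℝ] V, IsComplexStructure J → CompatibleWith ω₁ J → Tames ω₂ J)
    (v w : V) (hvw : LinearIndependent ℝ ![v, w]) :
    ω₁ v w = 0 ↔ ω₂ v w = 0 := by
  have hw0 : w ≠ 0 := (linearIndependent_fin2.1 hvw).1
  have hsm : ∀ a : ℝ, a • w ≠ v := by
    have := (linearIndependent_fin2.1 hvw).2
    simpa using this
  have hv0 : v ≠ 0 := fun hv => hsm 0 (by simp [hv])
  constructor
  · intro h10
    by_contra h20
    -- find f₁ with ω₁ v f₁ = 1 and ω₁ w f₁ = 0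
    have hexu : ∃ u : V, ω₁ w u = 0 ∧ ω₁ v u ≠ 0 := by
      by_contra hc
      push_neg at hc
      obtain ⟨u₀, hu₀⟩ := h₁.2 w hw0
      have hkey : ∀ u : V, ω₁ (v - (ω₁ v u₀ / ω₁ w u₀) • w) u = 0 := by
        intro u
        have hmem : ω₁ w (u - (ω₁ w u / ω₁ w u₀) • u₀) = 0 := by
          simp only [map_sub, map_smul, smul_eq_mul]
          field_simp
          ring
        have h' := hc _ hmem
        simp only [map_sub, map_smul, LinearMap.sub_apply, LinearMap.smul_apply,
          smul_eq_mul] at h' ⊢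
        field_simp at h' ⊢
        linarith
      have hzero : v - (ω₁ v u₀ / ω₁ w u₀) • w = 0 := by
        by_contra hne
        obtain ⟨u, hu⟩ := h₁.2 _ hne
        exact hu (hkey u)
      exact hsm (ω₁ v u₀ / ω₁ w u₀) (by rw [eq_comm, ← sub_eq_zero]; exact hzero)
    obtain ⟨u₀, hwu0, hvu0⟩ := hexu
    obtain ⟨f₁, hvf₁, hwf₁⟩ : ∃ f₁ : V, ω₁ v f₁ = 1 ∧ ω₁ w f₁ = 0 :=
      ⟨(ω₁ v u₀)⁻¹ • u₀, by rw [map_smul, smul_eq_mul, inv_mul_cancel₀ hvu0],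
        by rw [map_smul, smul_eq_mul, hwu0, mul_zero]⟩
    have key : ∀ t : ℝ, 0 < ω₂ v f₁ + t * ω₂ v w := by
      intro t
      have h1t : ω₁ v (f₁ + t • w) = 1 := by
        rw [map_add, hvf₁, map_smul, smul_eq_mul, h10, mul_zero, add_zero]
      obtain ⟨J, hJ1, hJ2, hJv⟩ := exists_compatible_pair ω₁ h₁ v (f₁ + t • w) h1t
      have ht := h J hJ1 hJ2 v hv0
      rwa [hJv, map_add, map_smul, smul_eq_mul] at ht
    have h' := key ((-1 - ω₂ v f₁) / (ω₂ v w))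
    rw [div_mul_cancel₀ _ h20] at h'
    linarith
  · intro h20
    by_contra h10
    obtain ⟨J, hJ1, hJ2, hJv⟩ := exists_compatible_pair ω₁ h₁ v ((ω₁ v w)⁻¹ • w)
      (by rw [map_smul, smul_eq_mul, inv_mul_cancel₀ h10])
    have ht := h J hJ1 hJ2 v hv0
    rw [hJv, map_smul, smul_eq_mul, h20, mul_zero] at ht
    exact lt_irrefl 0 ht
end

section
/- Let V be a finite-dimensional real vector space of dimension at least 4, let ω be a nondegenerate alternating bilinear form on V, and let α : V → ℝ be a nonzero linear functional. Then the exterior product α ∧ ω is nonzero, i.e. there exist vectors u, v, w ∈ V such that α(u)·ω(v,w) − α(v)·ω(u,w) + α(w)·ω(u,v) ≠ 0. -/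
theorem wedge_of_nonzero_functional_with_nondegenerate_form_ne_zero
    {V : Type*} [AddCommGroup V] [Module ℝ V] [FiniteDimensional ℝ V]
    (hdim : 4 ≤ Module.finrank ℝ V)
    (ω : V →ₗ[ℝ] V →ₗ[ℝ] ℝ)
    (halt : ∀ v, ω v v = 0)
    (hnondeg : ∀ v, v ≠ 0 → ∃ w, ω v w ≠ 0)
    (α : V →ₗ[ℝ] ℝ) (hα : α ≠ 0) :
    ∃ u v w : V, α u * ω v w - α v * ω u w + α w * ω u v ≠ 0 := by
  by_contra hcon
  push_neg at hcon
  obtain ⟨u, hu⟩ : ∃ u, α u ≠ 0 := by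
    by_contra h; push_neg at h
    exact hα (LinearMap.ext h)
  -- ω vanishes on ker α
  have hK : ∀ v w : V, α v = 0 → α w = 0 → ω v w = 0 := by
    intro v w hv hw
    have := hcon u v w
    rw [hv, hw] at this
    simp at this
    rcases this with h | h
    · exact absurd h hu
    · exact h
  -- dimension argument: ker α ⊓ ker (ω.flip u) is nonzero
  let p := LinearMap.ker α
  let q := LinearMap.ker (ω.flip u)
  have hp' : Module.finrank ℝ p = Module.finrank ℝ (LinearMap.ker α) := rfl
  have hq' : Module.finrank ℝ q = Module.finrank ℝ (LinearMap.ker (ω.flip u)) := rfl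
  have hpge : Module.finrank ℝ V ≤ Module.finrank ℝ p + 1 := by
    have := (α).finrank_range_add_finrank_ker
    have h1 : Module.finrank ℝ (LinearMap.range α) ≤ 1 := by
      simpa using Submodule.finrank_le (LinearMap.range α)
    omega
  have hqge : Module.finrank ℝ V ≤ Module.finrank ℝ q + 1 := by
    have := (ω.flip u).finrank_range_add_finrank_ker
    have h1 : Module.finrank ℝ (LinearMap.range (ω.flip u)) ≤ 1 := by
      simpa using Submodule.finrank_le (LinearMap.range (ω.flip u))
    omega
  have hsup : Module.finrank ℝ ↥(p ⊔ q) ≤ Module.finrank ℝ V :=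
    Submodule.finrank_le _
  have heq := Submodule.finrank_sup_add_finrank_inf_eq p q
  have hpos : 0 < Module.finrank ℝ ↥(p ⊓ q) := by omega
  obtain ⟨⟨v, hv⟩, hvne'⟩ := Module.finrank_pos_iff_exists_ne_zero.mp hpos
  have hvne : v ≠ 0 := by
    intro h; apply hvne'; exact Subtype.ext h
  obtain ⟨hvp, hvq⟩ := Submodule.mem_inf.mp hv
  obtain ⟨w, hw⟩ := hnondeg v hvne
  apply hw
  -- decompose w
  have hvu : ω v u = 0 := hvq
  have key : ω v (w - (α w / α u) • u) = 0 := by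
    apply hK
    · exact hvp
    · simp [map_sub, map_smul]
      field_simp
      ring
  have : ω v w = ω v (w - (α w / α u) • u) + (α w / α u) * ω v u := by
    simp [map_sub, map_smul]
  rw [this, key, hvu]; ring
end

section
/- Let E be a real inner product space, let L ≥ 0, and let X : E → E be a Lipschitz map with Lipschitz constant L. Let x : ℝ → E be continuously differentiable with x(1) = x(0). Then |∫₀¹ ⟨x′(t), X(x(t))⟩ dt| ≤ L · ∫₀¹ ‖x′(t)‖² dt. -/
open intervalIntegral

/-- Scalar FTC helper: `∫ t in a..b, ⟪x' t, u⟫ = ⟪x b, u⟫ - ⟪x a, u⟫`. -/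
lemma inner_deriv_integral
    {E : Type*} [NormedAddCommGroup E] [InnerProductSpace ℝ E]
    (x : ℝ → E) (hx : ContDiff ℝ 1 x) (u : E) (a b : ℝ) :
    ∫ t in a..b, (inner ℝ (deriv x t) u : ℝ) =
      (inner ℝ (x b) u : ℝ) - inner ℝ (x a) u := by
  have hdiff : Differentiable ℝ x := hx.differentiable one_ne_zero
  have hx' : Continuous (deriv x) := hx.continuous_deriv le_rfl
  refine intervalIntegral.integral_eq_sub_of_hasDerivAt
    (f := fun t => (inner ℝ (x t) u : ℝ)) (fun t _ => ?_) ?_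
  · have h := (HasDerivAt.inner ℝ (hdiff t).hasDerivAt (hasDerivAt_const t u))
    simpa using h
  · exact ((hx'.inner continuous_const)).intervalIntegrable a b

theorem loop_pseudogradient_inequality
    {E : Type*} [NormedAddCommGroup E] [InnerProductSpace ℝ E]
    (L : ℝ) (hL : 0 ≤ L) (X : E → E)
    (hX : ∀ p q : E, ‖X p - X q‖ ≤ L * ‖p - q‖)
    (x : ℝ → E) (hx : ContDiff ℝ 1 x) (hloop : x 1 = x 0) :
    |∫ t in (0:ℝ)..1, (inner ℝ (deriv x t) (X (x t)) : ℝ)| ≤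
      L * ∫ t in (0:ℝ)..1, ‖deriv x t‖ ^ 2 := by
  have hdiff : Differentiable ℝ x := hx.differentiable one_ne_zero
  have hx' : Continuous (deriv x) := hx.continuous_deriv le_rfl
  have hxc : Continuous x := hx.continuous
  set c := X (x 0) with hc
  set M := ∫ t in (0:ℝ)..1, ‖deriv x t‖ with hM
  have hMnn : 0 ≤ M :=
    intervalIntegral.integral_nonneg (by norm_num) fun t _ => norm_nonneg _
  -- bound ‖x t - x 0‖ ≤ M for t ∈ [0,1]
  have hbnd : ∀ t ∈ Set.Icc (0:ℝ) 1, ‖x t - x 0‖ ≤ M := by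
    intro t ht
    rcases eq_or_ne (x t) (x 0) with h | h
    · simpa [h] using hMnn
    · set v := x t - x 0 with hv
      have hvne : v ≠ 0 := sub_ne_zero.mpr h
      set u := ‖v‖⁻¹ • v with hu
      have h1 : (inner ℝ v u : ℝ) = ‖v‖ := by
        rw [hu, real_inner_smul_right, real_inner_self_eq_norm_mul_norm]
        field_simp
      have h2 : (inner ℝ v u : ℝ) = ∫ s in (0:ℝ)..t, (inner ℝ (deriv x s) u : ℝ) := by
        rw [inner_deriv_integral x hx u 0 t, hv, inner_sub_left]
      have h3 : (∫ s in (0:ℝ)..t, (inner ℝ (deriv x s) u : ℝ)) ≤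
          ∫ s in (0:ℝ)..t, ‖deriv x s‖ := by
        have hun : ‖u‖ = 1 := by
          rw [hu, norm_smul, norm_inv, norm_norm, inv_mul_cancel₀ (norm_ne_zero_iff.mpr hvne)]
        refine intervalIntegral.integral_mono_on ht.1 ?_ ?_ fun s _ => ?_
        · exact ((hx'.inner continuous_const)).intervalIntegrable 0 t
        · exact (hx'.norm).intervalIntegrable 0 t
        · calc (inner ℝ (deriv x s) u : ℝ) ≤ ‖deriv x s‖ * ‖u‖ :=
                real_inner_le_norm _ _
            _ = ‖deriv x s‖ := by rw [hun, mul_one]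
      have h4 : (∫ s in (0:ℝ)..t, ‖deriv x s‖) ≤ M := by
        rw [hM]
        refine intervalIntegral.integral_mono_interval le_rfl ht.1 ht.2 ?_ ?_
        · filter_upwards with s using norm_nonneg _
        · exact (hx'.norm).intervalIntegrable 0 1
      calc ‖x t - x 0‖ = (inner ℝ v u : ℝ) := h1.symm
        _ ≤ M := h2 ▸ (h3.trans h4)
  -- the constant part integrates to zero
  have hzero : (∫ t in (0:ℝ)..1, (inner ℝ (deriv x t) c : ℝ)) = 0 := by
    rw [inner_deriv_integral x hx c 0 1, hloop, sub_self]
  -- split the integral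
  have hint1 : IntervalIntegrable (fun t => (inner ℝ (deriv x t) (X (x t)) : ℝ))
      MeasureTheory.volume 0 1 := by
    have hXc : Continuous X := by
      rw [Metric.continuous_iff]
      intro p ε hε
      rcases eq_or_lt_of_le hL with hL0 | hLpos
      · exact ⟨1, one_pos, fun q _ => by
          have := hX q p
          rw [← hL0, zero_mul] at this
          have : X q = X p := by
            have := norm_le_zero_iff.mp this; rwa [sub_eq_zero] at this
          simpa [dist_eq_norm, this] using hε⟩
      · refine ⟨ε / L, by positivity, fun q hq => ?_⟩
        rw [dist_eq_norm]
        calc ‖X q - X p‖ ≤ L * ‖q - p‖ := hX q p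
          _ < L * (ε / L) := by
              apply mul_lt_mul_of_pos_left _ hLpos
              rwa [dist_eq_norm] at hq
          _ = ε := by field_simp
    exact ((hx'.inner (hXc.comp hxc))).intervalIntegrable 0 1
  have hint2 : IntervalIntegrable (fun t => (inner ℝ (deriv x t) c : ℝ))
      MeasureTheory.volume 0 1 :=
    ((hx'.inner continuous_const)).intervalIntegrable 0 1
  have hsplit : (∫ t in (0:ℝ)..1, (inner ℝ (deriv x t) (X (x t)) : ℝ)) =
      ∫ t in (0:ℝ)..1, (inner ℝ (deriv x t) (X (x t) - c) : ℝ) := by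
    have : (∫ t in (0:ℝ)..1, ((inner ℝ (deriv x t) (X (x t)) : ℝ) -
        inner ℝ (deriv x t) c)) =
        (∫ t in (0:ℝ)..1, (inner ℝ (deriv x t) (X (x t)) : ℝ)) -
        ∫ t in (0:ℝ)..1, (inner ℝ (deriv x t) c : ℝ) :=
      intervalIntegral.integral_sub hint1 hint2
    simp only [← inner_sub_right] at this
    rw [this, hzero, sub_zero]
  -- pointwise bound and integration
  have habs : |∫ t in (0:ℝ)..1, (inner ℝ (deriv x t) (X (x t)) : ℝ)| ≤
      ∫ t in (0:ℝ)..1, L * M * ‖deriv x t‖ := by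
    rw [hsplit]
    have := intervalIntegral.norm_integral_le_of_norm_le
      (f := fun t => (inner ℝ (deriv x t) (X (x t) - c) : ℝ))
      (g := fun t => L * M * ‖deriv x t‖) (μ := MeasureTheory.volume)
      (a := (0:ℝ)) (b := 1)
      (by norm_num) ?_ ((continuous_const.mul hx'.norm).intervalIntegrable 0 1)
    · refine le_trans (by simpa only [Real.norm_eq_abs] using this.trans (le_abs_self _)) (le_of_eq (abs_of_nonneg ?_))
      rw [intervalIntegral.integral_const_mul, ← hM]
      exact mul_nonneg (mul_nonneg hL hMnn) hMnn
    · filter_upwards with t ht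
      have ht' : t ∈ Set.Icc (0:ℝ) 1 := ⟨le_of_lt ht.1, ht.2⟩
      calc ‖(inner ℝ (deriv x t) (X (x t) - c) : ℝ)‖
          ≤ ‖deriv x t‖ * ‖X (x t) - c‖ := norm_inner_le_norm _ _
        _ ≤ ‖deriv x t‖ * (L * ‖x t - x 0‖) :=
            mul_le_mul_of_nonneg_left (hX (x t) (x 0)) (norm_nonneg _)
        _ ≤ ‖deriv x t‖ * (L * M) := by
            apply mul_le_mul_of_nonneg_left _ (norm_nonneg _)
            exact mul_le_mul_of_nonneg_left (hbnd t ht') hL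
        _ = L * M * ‖deriv x t‖ := by ring
  have hLM : (∫ t in (0:ℝ)..1, L * M * ‖deriv x t‖) = L * M * M := by
    rw [intervalIntegral.integral_const_mul, ← hM]
  -- Cauchy-Schwarz: M ^ 2 ≤ ∫ ‖x'‖ ^ 2
  have hCS : M ^ 2 ≤ ∫ t in (0:ℝ)..1, ‖deriv x t‖ ^ 2 := by
    set μ := MeasureTheory.volume.restrict (Set.Ioc (0:ℝ) 1) with hμ
    haveI : MeasureTheory.IsFiniteMeasure μ := by
      constructor
      rw [hμ, MeasureTheory.Measure.restrict_apply_univ, Real.volume_Ioc]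
      norm_num
    obtain ⟨C, hC⟩ := (isCompact_Icc (a := (0:ℝ)) (b := 1)).exists_bound_of_continuousOn
      (hx'.norm).continuousOn
    have hf2 : MeasureTheory.MemLp (fun t => ‖deriv x t‖) (ENNReal.ofReal 2) μ := by
      refine MeasureTheory.MemLp.of_bound
        ((hx'.norm).aestronglyMeasurable) C ?_
      filter_upwards [MeasureTheory.ae_restrict_mem measurableSet_Ioc] with t ht
      exact hC t ⟨le_of_lt ht.1, ht.2⟩
    have hg2 : MeasureTheory.MemLp (fun _ : ℝ => (1:ℝ)) (ENNReal.ofReal 2) μ :=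
      MeasureTheory.memLp_const 1
    have hpq : Real.HolderConjugate 2 2 := by constructor <;> norm_num
    have H := MeasureTheory.integral_mul_le_Lp_mul_Lq_of_nonneg hpq
      (f := fun t => ‖deriv x t‖) (g := fun _ => (1:ℝ)) (μ := μ)
      (Filter.Eventually.of_forall fun t => norm_nonneg _)
      (Filter.Eventually.of_forall fun t => zero_le_one) hf2 hg2
    simp only [mul_one, Real.rpow_two] at H
    have hμ1 : (∫ _ : ℝ, (1:ℝ) ∂μ) = 1 := by
      rw [MeasureTheory.integral_const, smul_eq_mul, mul_one, hμ,
        MeasureTheory.measureReal_restrict_apply_univ, MeasureTheory.measureReal_def,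
        Real.volume_Ioc]
      norm_num
    have hMeq : M = ∫ t, ‖deriv x t‖ ∂μ := by
      rw [hM, intervalIntegral.integral_of_le (by norm_num : (0:ℝ) ≤ 1), hμ]
    have hI2 : (∫ t in (0:ℝ)..1, ‖deriv x t‖ ^ 2) = ∫ t, ‖deriv x t‖ ^ 2 ∂μ := by
      rw [intervalIntegral.integral_of_le (by norm_num : (0:ℝ) ≤ 1), hμ]
    have hI2nn : 0 ≤ ∫ t, ‖deriv x t‖ ^ 2 ∂μ :=
      MeasureTheory.integral_nonneg fun t => by positivity
    -- H : ∫ ‖x'‖ ≤ (∫ ‖x'‖^2)^(1/2) * (∫ 1^2)^(1/2)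
    have h1pow : (∫ _ : ℝ, (1:ℝ) ^ 2 ∂μ) ^ ((1:ℝ)/2) = 1 := by
      simp only [one_pow]
      rw [hμ1, Real.one_rpow]
    rw [hI2]
    have H' : M ≤ (∫ t, ‖deriv x t‖ ^ 2 ∂μ) ^ ((1:ℝ)/2) := by
      rw [hMeq]
      calc (∫ t, ‖deriv x t‖ ∂μ)
          ≤ (∫ a, ‖deriv x a‖ ^ 2 ∂μ) ^ ((1:ℝ)/2) *
            (∫ _ : ℝ, (1:ℝ) ^ 2 ∂μ) ^ ((1:ℝ)/2) := H
        _ = (∫ t, ‖deriv x t‖ ^ 2 ∂μ) ^ ((1:ℝ)/2) := by rw [h1pow, mul_one]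
    calc M ^ 2 ≤ ((∫ t, ‖deriv x t‖ ^ 2 ∂μ) ^ ((1:ℝ)/2)) ^ 2 := by
          exact pow_le_pow_left₀ hMnn H' 2
      _ = ∫ t, ‖deriv x t‖ ^ 2 ∂μ := by
          rw [← Real.rpow_natCast _ 2, ← Real.rpow_mul hI2nn]
          norm_num
  calc |∫ t in (0:ℝ)..1, (inner ℝ (deriv x t) (X (x t)) : ℝ)|
      ≤ ∫ t in (0:ℝ)..1, L * M * ‖deriv x t‖ := habs
    _ = L * (M ^ 2) := by rw [hLM]; ring
    _ ≤ L * ∫ t in (0:ℝ)..1, ‖deriv x t‖ ^ 2 :=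
        mul_le_mul_of_nonneg_left hCS hL
end

section
/- Let 0 < δ < 1, 0 < ε < 1 and 0 < c ≤ C be real numbers. Let g : ℝ → ℝ be differentiable at every point of (0, ∞), strictly increasing on (0, ∞), and satisfy: g(y) = (1 − δ) − 1/log y for all y ∈ (0, ε]; c ≤ g′(y) ≤ C for all y ∈ [ε, 1]; and g(y) = y for all y ≥ 1. Then there exists a constant K ≥ 1 such that for all S > 0 and all λ ≥ 1 one has g′(S/λ) · g(S) ≤ K · λ · g′(S) · g(S/λ). -/
set_option maxHeartbeats 1000000 in

theorem rescaled_radial_coordinate_comparison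
    (δ ε c C : ℝ) (hδ0 : 0 < δ) (hδ1 : δ < 1) (hε0 : 0 < ε) (hε1 : ε < 1)
    (hc : 0 < c) (hcC : c ≤ C)
    (g : ℝ → ℝ)
    (hdiff : ∀ y ∈ Set.Ioi (0:ℝ), DifferentiableAt ℝ g y)
    (hmono : StrictMonoOn g (Set.Ioi (0:ℝ)))
    (hsmall : ∀ y ∈ Set.Ioc (0:ℝ) ε, g y = (1 - δ) - 1 / Real.log y)
    (hmid : ∀ y ∈ Set.Icc ε (1:ℝ), c ≤ deriv g y ∧ deriv g y ≤ C)
    (hbig : ∀ y : ℝ, 1 ≤ y → g y = y) :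
    ∃ K : ℝ, 1 ≤ K ∧ ∀ S : ℝ, 0 < S → ∀ lam : ℝ, 1 ≤ lam →
      deriv g (S / lam) * g S ≤ K * lam * deriv g S * g (S / lam) := by
  have hδ' : (0:ℝ) < 1 - δ := by linarith
  have hLε : Real.log ε < 0 := Real.log_neg hε0 hε1
  have hLε2 : 0 < (Real.log ε) ^ 2 := by nlinarith
  have hg1 : g 1 = 1 := hbig 1 le_rfl
  -- lower bound on g
  have hglb : ∀ y : ℝ, 0 < y → 1 - δ ≤ g y := by
    intro y hy
    rcases le_or_gt y ε with h | h
    · rw [hsmall y ⟨hy, h⟩]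
      have hl : Real.log y < 0 := Real.log_neg hy (lt_of_le_of_lt h hε1)
      have : 1 / Real.log y < 0 := div_neg_of_pos_of_neg one_pos hl
      linarith
    · have hεle : g ε ≤ g y :=
        hmono.monotoneOn (Set.mem_Ioi.mpr hε0) (Set.mem_Ioi.mpr (hε0.trans h)) h.le
      have hgε : g ε = (1 - δ) - 1 / Real.log ε := hsmall ε ⟨hε0, le_rfl⟩
      have : 1 / Real.log ε < 0 := div_neg_of_pos_of_neg one_pos hLε
      linarith
  have hgpos : ∀ y : ℝ, 0 < y → 0 < g y := fun y hy =>
    lt_of_lt_of_le hδ' (hglb y hy)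
  have hgle1 : ∀ y : ℝ, 0 < y → y ≤ 1 → g y ≤ 1 := by
    intro y hy hy1
    have := hmono.monotoneOn (Set.mem_Ioi.mpr hy) (Set.mem_Ioi.mpr one_pos) hy1
    linarith [hg1 ▸ this]
  -- derivative formula for small y
  have hderiv_small : ∀ y : ℝ, 0 < y → y < ε →
      deriv g y = y⁻¹ / (Real.log y) ^ 2 := by
    intro y hy hyε
    have hlogne : Real.log y ≠ 0 := ne_of_lt (Real.log_neg hy (hyε.trans hε1))
    have h2 := (Real.hasDerivAt_log (ne_of_gt hy)).inv hlogne
    have h3 := h2.const_sub (1 - δ)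
    have h1 : HasDerivAt (fun x => (1 - δ) - 1 / Real.log x)
        (y⁻¹ / (Real.log y) ^ 2) y := by
      simpa [one_div, neg_div] using h3
    have hev : (fun x => (1 - δ) - 1 / Real.log x) =ᶠ[nhds y] g := by
      filter_upwards [Ioo_mem_nhds hy hyε] with x hx
      exact (hsmall x ⟨hx.1, hx.2.le⟩).symm
    rw [Filter.EventuallyEq.deriv_eq hev.symm, h1.deriv]
  -- derivative formula for big y
  have hderiv_big : ∀ y : ℝ, 1 < y → deriv g y = 1 := by
    intro y hy
    have hev : g =ᶠ[nhds y] id := by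
      filter_upwards [Ioi_mem_nhds hy] with x hx
      exact hbig x hx.le
    rw [hev.deriv_eq, deriv_id]
  -- constants
  set A : ℝ := 1 / ((1 - δ) * (Real.log ε) ^ 2) with hAdef
  set B : ℝ := C / (1 - δ) with hBdef
  set M : ℝ := max 1 (max B A) with hMdef
  set m : ℝ := min 1 (ε * c) with hmdef
  have hM1 : (1:ℝ) ≤ M := le_max_left _ _
  have hM0 : (0:ℝ) ≤ M := le_trans zero_le_one hM1
  have hm0 : 0 < m := lt_min one_pos (by positivity)
  have hm1 : m ≤ 1 := min_le_left _ _
  have hmεc : m ≤ ε * c := min_le_right _ _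
  refine ⟨M / m, ?_, ?_⟩
  · rw [le_div_iff₀ hm0, one_mul]; exact le_trans hm1 hM1
  set K : ℝ := M / m with hKdef
  have hK1 : (1:ℝ) ≤ K := by rw [hKdef, le_div_iff₀ hm0, one_mul]; exact le_trans hm1 hM1
  have hK0 : (0:ℝ) < K := lt_of_lt_of_le one_pos hK1
  have hKm : K * m = M := div_mul_cancel₀ _ (ne_of_gt hm0)
  -- upper bound: y * g'(y) ≤ M * g(y)
  have hupper : ∀ y : ℝ, 0 < y → y * deriv g y ≤ M * g y := by
    intro y hy
    rcases lt_or_ge y ε with h | h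
    · rw [hderiv_small y hy h]
      have hLy : Real.log y ≤ Real.log ε := Real.log_le_log hy h.le
      have hLy0 : Real.log y < 0 := lt_of_le_of_lt hLy hLε
      have h2 : (Real.log ε) ^ 2 ≤ (Real.log y) ^ 2 := by nlinarith
      have e1 : y * (y⁻¹ / (Real.log y) ^ 2) = 1 / (Real.log y) ^ 2 := by
        rw [← mul_div_assoc, mul_inv_cancel₀ (ne_of_gt hy)]
      rw [e1]
      have h3 : 1 / (Real.log y) ^ 2 ≤ 1 / (Real.log ε) ^ 2 :=
        one_div_le_one_div_of_le hLε2 h2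
      have hA : A * (1 - δ) = 1 / (Real.log ε) ^ 2 := by
        rw [hAdef]; field_simp
      have hAM : A ≤ M := le_trans (le_max_right _ _) (le_max_right _ _)
      calc 1 / (Real.log y) ^ 2 ≤ 1 / (Real.log ε) ^ 2 := h3
        _ = A * (1 - δ) := hA.symm
        _ ≤ M * g y := mul_le_mul hAM (hglb y hy) hδ'.le hM0
    · rcases le_or_gt y 1 with h' | h'
      · obtain ⟨hcd, hdC⟩ := hmid y ⟨h, h'⟩
        have hC0 : (0:ℝ) ≤ C := le_trans hc.le hcC
        have h1 : y * deriv g y ≤ 1 * C :=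
          mul_le_mul h' hdC (le_trans hc.le hcd) zero_le_one
        have hB : B * (1 - δ) = C := by rw [hBdef]; field_simp
        have hBM : B ≤ M := le_trans (le_max_left _ _) (le_max_right _ _)
        calc y * deriv g y ≤ 1 * C := h1
          _ = B * (1 - δ) := by rw [hB, one_mul]
          _ ≤ M * g y := mul_le_mul hBM (hglb y hy) hδ'.le hM0
      · rw [hderiv_big y h', hbig y h'.le]
        nlinarith
  -- lower bound: m * g(S) ≤ S * g'(S) for S ≥ ε
  have hlower : ∀ S : ℝ, ε ≤ S → m * g S ≤ S * deriv g S := by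
    intro S hεS
    have hS : 0 < S := lt_of_lt_of_le hε0 hεS
    rcases le_or_gt S 1 with h | h
    · obtain ⟨hcd, _⟩ := hmid S ⟨hεS, h⟩
      have h1 : m * g S ≤ ε * c := by
        have hg1' := hgle1 S hS h
        have hg0' := hgpos S hS
        nlinarith
      have h2 : ε * c ≤ S * deriv g S :=
        mul_le_mul hεS hcd hc.le hS.le
      linarith
    · rw [hderiv_big S h, hbig S h.le]
      nlinarith
  -- main proof
  intro S hS lam hlam
  have hlam0 : (0:ℝ) < lam := lt_of_lt_of_le one_pos hlam
  set t : ℝ := S / lam with htdef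
  have ht0 : 0 < t := div_pos hS hlam0
  have htS : t ≤ S := div_le_self hS.le hlam
  have hSeq : S = lam * t := by rw [htdef]; field_simp
  have hmain : t * deriv g t * g S ≤ K * S * deriv g S * g t := by
    rcases lt_or_ge S ε with hA' | hB'
    · -- both small
      have htε : t < ε := lt_of_le_of_lt htS hA'
      rw [hderiv_small t ht0 htε, hderiv_small S hS hA',
        hsmall t ⟨ht0, htε.le⟩, hsmall S ⟨hS, hA'.le⟩]
      set Lt := Real.log t with hLtdef
      set Ls := Real.log S with hLsdef
      have hLts : Lt ≤ Ls := Real.log_le_log ht0 htS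
      have hLs0 : Ls < 0 := Real.log_neg hS (hA'.trans hε1)
      have hLt0 : Lt < 0 := lt_of_le_of_lt hLts hLs0
      have hLsne : Ls ≠ 0 := ne_of_lt hLs0
      have hLtne : Lt ≠ 0 := ne_of_lt hLt0
      have hLt2 : 0 < Lt ^ 2 := by nlinarith
      have hLs2 : 0 < Ls ^ 2 := by nlinarith
      have hgt0 : 0 < (1 - δ) - 1 / Lt := by
        have : 1 / Lt < 0 := div_neg_of_pos_of_neg one_pos hLt0
        linarith
      have key : (1 / Lt ^ 2) * ((1 - δ) - 1 / Ls) ≤ (1 / Ls ^ 2) * ((1 - δ) - 1 / Lt) := by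
        rw [div_mul_eq_mul_div, div_mul_eq_mul_div, div_le_div_iff₀ hLt2 hLs2]
        have e1 : 1 * ((1 - δ) - 1 / Ls) * Ls ^ 2 = (1 - δ) * Ls ^ 2 - Ls := by
          field_simp
        have e2 : 1 * ((1 - δ) - 1 / Lt) * Lt ^ 2 = (1 - δ) * Lt ^ 2 - Lt := by
          field_simp
        rw [e1, e2]
        have h2nn : 0 ≤ 1 - (1 - δ) * (Lt + Ls) := by nlinarith
        nlinarith [mul_nonneg (sub_nonneg.mpr hLts) h2nn]
      have e1 : t * (t⁻¹ / Lt ^ 2) = 1 / Lt ^ 2 := by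
        rw [← mul_div_assoc, mul_inv_cancel₀ (ne_of_gt ht0)]
      have e2 : S * (S⁻¹ / Ls ^ 2) = 1 / Ls ^ 2 := by
        rw [← mul_div_assoc, mul_inv_cancel₀ (ne_of_gt hS)]
      calc t * (t⁻¹ / Lt ^ 2) * ((1 - δ) - 1 / Ls)
          = 1 / Lt ^ 2 * ((1 - δ) - 1 / Ls) := by rw [e1]
        _ ≤ 1 / Ls ^ 2 * ((1 - δ) - 1 / Lt) := key
        _ ≤ K * (1 / Ls ^ 2 * ((1 - δ) - 1 / Lt)) :=
            le_mul_of_one_le_left (le_of_lt (mul_pos (by positivity) hgt0)) hK1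
        _ = K * S * (S⁻¹ / Ls ^ 2) * ((1 - δ) - 1 / Lt) := by rw [← e2]; ring
    · -- S ≥ ε
      have h1 := hupper t ht0
      have h2 := hlower S hB'
      have hgS := hgpos S hS
      have hgt := hgpos t ht0
      calc t * deriv g t * g S ≤ (M * g t) * g S :=
            mul_le_mul_of_nonneg_right h1 hgS.le
        _ = K * (m * g S) * g t := by rw [← hKm]; ring
        _ ≤ K * (S * deriv g S) * g t :=
            mul_le_mul_of_nonneg_right (mul_le_mul_of_nonneg_left h2 hK0.le) hgt.le
        _ = K * S * deriv g S * g t := by ring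
  have hfin : t * (deriv g t * g S) ≤ t * (K * lam * deriv g S * g t) := by
    calc t * (deriv g t * g S) = t * deriv g t * g S := by ring
      _ ≤ K * S * deriv g S * g t := hmain
      _ = t * (K * lam * deriv g S * g t) := by rw [hSeq]; ring
  exact le_of_mul_le_mul_left hfin ht0
end

section
/- Let a > 0 and let f : ℝ → ℝ be continuously differentiable with f(t) ≥ 0 for all t ∈ [0, a]. Suppose m is a real number such that f(t₀) ≤ m for some t₀ ∈ [0, a]. Then ∫₀ᵃ f(t)² dt ≤ a · (m + √a · (∫₀ᵃ f′(t)² dt)^{1/2})². -/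
open MeasureTheory intervalIntegral Set Filter

theorem poincare_type_inequality
    (a : ℝ) (ha : 0 < a) (f : ℝ → ℝ) (hf : ContDiff ℝ 1 f)
    (hpos : ∀ t ∈ Set.Icc (0:ℝ) a, 0 ≤ f t)
    (m : ℝ) (hm : ∃ t₀ ∈ Set.Icc (0:ℝ) a, f t₀ ≤ m) :
    (∫ t in (0:ℝ)..a, (f t) ^ 2) ≤
      a * (m + Real.sqrt a * Real.sqrt (∫ t in (0:ℝ)..a, (deriv f t) ^ 2)) ^ 2 := by
  obtain ⟨t₀, ht₀, hft₀⟩ := hm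
  have hd : Continuous (deriv f) := (hf.iterate_deriv' 0 1).continuous
  have hfc : Continuous f := hf.continuous
  have hdiff : Differentiable ℝ f := hf.differentiable one_ne_zero
  set μ := volume.restrict (Set.Ioc (0:ℝ) a) with hμ
  have hfin : IsFiniteMeasure μ := by
    constructor
    rw [hμ, Measure.restrict_apply_univ, Real.volume_Ioc]
    exact ENNReal.ofReal_lt_top
  -- Cauchy–Schwarz: ∫₀ᵃ |f'| ≤ √a √(∫₀ᵃ f'²)
  have hmemg : MemLp (fun t => |deriv f t|) (ENNReal.ofReal 2) μ := by
    obtain ⟨C, hC⟩ := (isCompact_Icc (a := (0:ℝ)) (b := a)).exists_bound_of_continuousOn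
      hd.continuousOn
    refine MemLp.of_bound (hd.abs.aestronglyMeasurable) C ?_
    rw [hμ]
    filter_upwards [ae_restrict_mem measurableSet_Ioc] with x hx
    simpa [abs_abs] using hC x (Set.Ioc_subset_Icc_self hx)
  have hCS : (∫ t in (0:ℝ)..a, |deriv f t|) ≤
      Real.sqrt a * Real.sqrt (∫ t in (0:ℝ)..a, (deriv f t) ^ 2) := by
    have h := integral_mul_le_Lp_mul_Lq_of_nonneg (μ := μ)
      (Real.holderConjugate_iff_eq_conjExponent (p := 2) one_lt_two |>.mpr (by norm_num))
      (f := fun _ => (1:ℝ)) (g := fun t => |deriv f t|)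
      (Eventually.of_forall fun _ => zero_le_one)
      (Eventually.of_forall fun t => abs_nonneg _)
      (memLp_const 1) hmemg
    simp only [one_mul] at h
    have h1 : (∫ _x, (1:ℝ) ^ (2:ℝ) ∂μ) = a := by
      simp [hμ, Measure.restrict_apply_univ, Real.volume_Ioc, ha.le]
    have h2 : (∫ x, |deriv f x| ^ (2:ℝ) ∂μ) = ∫ x, (deriv f x) ^ 2 ∂μ := by
      refine integral_congr_ae (Eventually.of_forall fun x => ?_)
      show |deriv f x| ^ (2:ℝ) = (deriv f x) ^ 2
      rw [show ((2:ℝ)) = ((2:ℕ):ℝ) by norm_num, Real.rpow_natCast, sq_abs]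
    rw [h1, h2] at h
    rw [integral_of_le ha.le, integral_of_le ha.le]
    calc (∫ t in Set.Ioc (0:ℝ) a, |deriv f t|) ≤ a ^ ((1:ℝ)/2) *
        (∫ x, (deriv f x) ^ 2 ∂μ) ^ ((1:ℝ)/2) := h
      _ = Real.sqrt a * Real.sqrt (∫ t in Set.Ioc (0:ℝ) a, (deriv f t) ^ 2) := by
          rw [Real.sqrt_eq_rpow, Real.sqrt_eq_rpow]
  set K := m + Real.sqrt a * Real.sqrt (∫ t in (0:ℝ)..a, (deriv f t) ^ 2) with hK
  -- pointwise bound f t ≤ K on [0,a]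
  have hbound : ∀ t ∈ Set.Icc (0:ℝ) a, f t ≤ K := by
    intro t ht
    have hint : ∀ u v : ℝ, IntervalIntegrable (deriv f) volume u v :=
      fun u v => hd.intervalIntegrable u v
    have heq : f t - f t₀ = ∫ u in t₀..t, deriv f u :=
      (integral_deriv_eq_sub (fun x _ => hdiff x) (hint t₀ t)).symm
    have h1 : |∫ u in t₀..t, deriv f u| ≤ |(∫ u in t₀..t, |deriv f u|)| := by
      simpa [Real.norm_eq_abs] using
        intervalIntegral.norm_integral_le_abs_integral_norm (f := deriv f) (a := t₀) (b := t)
    have h2 : |(∫ u in t₀..t, |deriv f u|)| ≤ |(∫ u in (0:ℝ)..a, |deriv f u|)| := by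
      refine intervalIntegral.abs_integral_mono_interval ?_
        (Eventually.of_forall fun x => abs_nonneg _) ((hint 0 a).abs)
      rw [Set.uIoc_of_le ha.le]
      refine Set.Ioc_subset_Ioc ?_ ?_
      · exact le_inf ht₀.1 ht.1
      · exact sup_le ht₀.2 ht.2
    have h3 : |(∫ u in (0:ℝ)..a, |deriv f u|)| = ∫ u in (0:ℝ)..a, |deriv f u| :=
      abs_of_nonneg (intervalIntegral.integral_nonneg ha.le fun x _ => abs_nonneg _)
    have : f t ≤ f t₀ + ∫ u in (0:ℝ)..a, |deriv f u| := by
      have := (le_abs_self (f t - f t₀)).trans (heq ▸ (h1.trans (h2.trans_eq h3)))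
      linarith
    calc f t ≤ f t₀ + ∫ u in (0:ℝ)..a, |deriv f u| := this
      _ ≤ K := by rw [hK]; exact add_le_add hft₀ hCS
  have hK0 : 0 ≤ K := le_trans (hpos 0 (Set.mem_Icc.mpr ⟨le_rfl, ha.le⟩))
    (hbound 0 (Set.mem_Icc.mpr ⟨le_rfl, ha.le⟩))
  have hsq : ∀ t ∈ Set.Icc (0:ℝ) a, (f t) ^ 2 ≤ K ^ 2 := fun t ht =>
    pow_le_pow_left₀ (hpos t ht) (hbound t ht) 2
  calc (∫ t in (0:ℝ)..a, (f t) ^ 2) ≤ ∫ _t in (0:ℝ)..a, K ^ 2 := by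
        refine intervalIntegral.integral_mono_on ha.le
          ((hfc.pow 2).intervalIntegrable 0 a) (intervalIntegrable_const) hsq
    _ = a * K ^ 2 := by simp
end

section
/- Let A ≥ 0, B ≥ 0, C̄ ≥ 0 and R ∈ ℝ. Let φ : ℝ → ℝ be twice continuously differentiable with φ(s) ≥ 0 for all s, 0 ≤ φ′(s) ≤ 1 and φ″(s) ≥ 0 for all s, φ(s) = 0 and φ′(s) = 0 for all s ≤ R, and s ≤ φ(s) + C̄ for all s ≥ 0. Let α : ℝ × ℝ → ℝ be twice continuously differentiable with α ≥ 0, and suppose that Δα(p) ≥ −A − B·α(p) at every point p ∈ ℝ × ℝ with α(p) ≥ R. Then Δ(φ ∘ α)(p) ≥ −(A + B·C̄) − B·(φ ∘ α)(p) at every point p ∈ ℝ × ℝ. -/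
/-- The Laplacian of a function `u : ℝ × ℝ → ℝ`,
`Δu = ∂²u/∂s² + ∂²u/∂t²`. -/
noncomputable def laplacian2 (u : ℝ × ℝ → ℝ) (p : ℝ × ℝ) : ℝ :=
  deriv (fun s => deriv (fun s' => u (s', p.2)) s) p.1 +
    deriv (fun t => deriv (fun t' => u (p.1, t')) t) p.2

lemma chain_second_deriv (φ f : ℝ → ℝ) (hφ : ContDiff ℝ 2 φ) (hf : ContDiff ℝ 2 f) (x : ℝ) :
    deriv (deriv (fun y => φ (f y))) x =
      deriv (deriv φ) (f x) * (deriv f x) ^ 2 + deriv φ (f x) * deriv (deriv f) x := by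
  have hφ1 : ContDiff ℝ 1 φ := hφ.of_le (by norm_num)
  have hf1 : ContDiff ℝ 1 f := hf.of_le (by norm_num)
  have hφd : ContDiff ℝ 1 (deriv φ) :=
    (contDiff_succ_iff_deriv.mp (show ContDiff ℝ (1+1) φ from hφ)).2.2
  have hfd : ContDiff ℝ 1 (deriv f) :=
    (contDiff_succ_iff_deriv.mp (show ContDiff ℝ (1+1) f from hf)).2.2
  have hd : deriv (fun y => φ (f y)) = fun y => deriv φ (f y) * deriv f y := by
    funext y
    exact deriv_comp y (hφ1.differentiable one_ne_zero (f y)) (hf1.differentiable one_ne_zero y)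
  rw [hd]
  have h1 : DifferentiableAt ℝ (fun y => deriv φ (f y)) x :=
    (hφd.differentiable one_ne_zero (f x)).comp x (hf1.differentiable one_ne_zero x)
  have h2 : DifferentiableAt ℝ (deriv f) x := hfd.differentiable one_ne_zero x
  rw [deriv_fun_mul h1 h2]
  have h3 : deriv (fun y => deriv φ (f y)) x = deriv (deriv φ) (f x) * deriv f x :=
    deriv_comp x (hφd.differentiable one_ne_zero (f x)) (hf1.differentiable one_ne_zero x)
  rw [h3]; ring

theorem cutoff_laplacian_inequality
    (A B Cbar R : ℝ) (hA : 0 ≤ A) (hB : 0 ≤ B) (hCbar : 0 ≤ Cbar)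
    (φ : ℝ → ℝ) (hφ : ContDiff ℝ 2 φ)
    (hφpos : ∀ s, 0 ≤ φ s)
    (hφ' : ∀ s, 0 ≤ deriv φ s ∧ deriv φ s ≤ 1)
    (hφ'' : ∀ s, 0 ≤ deriv (deriv φ) s)
    (hφzero : ∀ s, s ≤ R → φ s = 0)
    (hφ'zero : ∀ s, s ≤ R → deriv φ s = 0)
    (hφbound : ∀ s, 0 ≤ s → s ≤ φ s + Cbar)
    (α : ℝ × ℝ → ℝ) (hα : ContDiff ℝ 2 α) (hαpos : ∀ p, 0 ≤ α p)
    (hΔα : ∀ p : ℝ × ℝ, R ≤ α p → -A - B * α p ≤ laplacian2 α p) :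
    ∀ p : ℝ × ℝ,
      -(A + B * Cbar) - B * φ (α p) ≤ laplacian2 (fun q => φ (α q)) p := by
  intro p
  set fs : ℝ → ℝ := fun s => α (s, p.2) with hfs_def
  set ft : ℝ → ℝ := fun t => α (p.1, t) with hft_def
  have hfs : ContDiff ℝ 2 fs := hα.comp (contDiff_id.prodMk contDiff_const)
  have hft : ContDiff ℝ 2 ft := hα.comp (contDiff_const.prodMk contDiff_id)
  have hαp : fs p.1 = α p := by simp [hfs_def]
  have hαp' : ft p.2 = α p := by simp [hft_def]
  have hlap : laplacian2 (fun q => φ (α q)) p =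
      deriv (deriv φ) (α p) * ((deriv fs p.1) ^ 2 + (deriv ft p.2) ^ 2) +
        deriv φ (α p) * laplacian2 α p := by
    have e1 := chain_second_deriv φ fs hφ hfs p.1
    have e2 := chain_second_deriv φ ft hφ hft p.2
    rw [hαp] at e1; rw [hαp'] at e2
    show deriv (deriv (fun y => φ (fs y))) p.1 + deriv (deriv (fun y => φ (ft y))) p.2 = _
    rw [e1, e2]
    show _ = _ * _ + _ * (deriv (deriv fs) p.1 + deriv (deriv ft) p.2)
    ring
  rw [hlap]
  rcases le_or_gt R (α p) with h | h
  · have hΔ := hΔα p h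
    have hsq : 0 ≤ (deriv fs p.1) ^ 2 + (deriv ft p.2) ^ 2 := by positivity
    have h2 := hφ'' (α p)
    obtain ⟨hd0, hd1⟩ := hφ' (α p)
    have hb := hφbound (α p) (hαpos p)
    nlinarith [mul_nonneg h2 hsq, mul_le_mul_of_nonneg_left hΔ hd0,
      mul_nonneg hB (hαpos p), mul_nonneg hB (hφpos (α p)),
      mul_le_mul_of_nonneg_left hd1 hA,
      mul_le_of_le_one_left (mul_nonneg hB (hαpos p)) hd1]
  · have hd0 : deriv φ (α p) = 0 := hφ'zero _ h.le
    have hdd : deriv (deriv φ) (α p) = 0 := by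
      have hev : deriv φ =ᶠ[nhds (α p)] (fun _ => (0:ℝ)) :=
        Filter.eventuallyEq_of_mem (Iio_mem_nhds h) (fun s hs => hφ'zero s (le_of_lt hs))
      rw [hev.deriv_eq, deriv_const]
    rw [hd0, hdd]
    nlinarith [hφpos (α p), mul_nonneg hB (hφpos (α p)), mul_nonneg hB hCbar]
end
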